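/- arXiv:1509.06265 — 15 statements merged into one kernel-verified Lean document; each statement's English description precedes it below -/
import Mathlib

section
/- Let x be a real number represented by (m,n,p) with p ≥ 1. Then x ≠ 0 and 1/x is represented by (n,m,p-1); that is, |1/x - n/m| < |n/m| * (1/2^(p-1)). -/
/-- If `x` is represented by `(m, n, p)` with `p ≥ 1`, then `x ≠ 0` and
`1 / x` is represented by `(n, m, p - 1)`. -/
theorem inv_represented (x : ℝ) (m n : ℤ) (p : ℕ) (hm : m ≠ 0) (hn : n ≠ 0) (hp : 1 ≤ p)
    (hx : |x - (m : ℝ) / (n : ℝ)| < |(m : ℝ) / (n : ℝ)| * (1 / 2 ^ p)) :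
    x ≠ 0 ∧
      |1 / x - (n : ℝ) / (m : ℝ)| < |(n : ℝ) / (m : ℝ)| * (1 / 2 ^ (p - 1)) := by
  have hm' : (m : ℝ) ≠ 0 := Int.cast_ne_zero.mpr hm
  have hn' : (n : ℝ) ≠ 0 := Int.cast_ne_zero.mpr hn
  set r : ℝ := (m : ℝ) / n with hrdef
  have hr : r ≠ 0 := div_ne_zero hm' hn'
  have hrpos : 0 < |r| := abs_pos.mpr hr
  have hq : (0:ℝ) < 2 ^ (p - 1) := by positivity
  have hpow : (2:ℝ) ^ p = 2 * 2 ^ (p - 1) := by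
    rw [← pow_succ']
    congr 1
    omega
  have h2p : (2:ℝ) ≤ 2 ^ p := by
    calc (2:ℝ) = 2 ^ 1 := (pow_one 2).symm
    _ ≤ 2 ^ p := pow_le_pow_right₀ one_le_two hp
  have hfrac : |r| * (1 / 2 ^ p) ≤ |r| / 2 := by
    rw [mul_one_div, div_le_div_iff₀ (by positivity) (by norm_num)]
    nlinarith
  have hsub : |r| - |x| ≤ |x - r| := by
    rw [abs_sub_comm]
    exact abs_sub_abs_le_abs_sub r x
  have hxlow : |r| / 2 < |x| := by linarith
  have hxpos : 0 < |x| := by linarith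
  have hx0 : x ≠ 0 := abs_pos.mp hxpos
  refine ⟨hx0, ?_⟩
  have hinv : (n : ℝ) / m = 1 / r := by
    rw [hrdef, one_div_div]
  rw [hinv]
  have key : 1 / x - 1 / r = (r - x) / (x * r) := by
    field_simp
  rw [key, abs_div, abs_mul, abs_one_div, abs_sub_comm]
  rw [one_div_mul_one_div, div_lt_div_iff₀ (by positivity) (by positivity)]
  have hx' : |x - r| * 2 ^ p < |r| := by
    rw [mul_one_div, lt_div_iff₀ (by positivity)] at hx
    linarith
  rw [hpow] at hx'
  nlinarith [abs_nonneg (x - r)]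
end

section
/- Let x and y be real numbers represented by (m,n,p) and (m',n',p) respectively, and suppose the rational approximations have the same sign, i.e. (m/n)·(m'/n') > 0. Then x + y is represented by (m·n' + m'·n, n·n', p); that is, |(x+y) - (m·n' + m'·n)/(n·n')| < |(m·n' + m'·n)/(n·n')| * (1/2^p). -/
/-- If `x` and `y` are represented by `(m, n, p)` and `(m', n', p)` and the rational
approximations have the same sign, then `x + y` is represented by
`(m * n' + m' * n, n * n', p)`. -/
theorem add_represented_same_sign (x y : ℝ) (m n m' n' : ℤ) (p : ℕ)
    (hm : m ≠ 0) (hn : n ≠ 0) (hm' : m' ≠ 0) (hn' : n' ≠ 0)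
    (hsign : ((m : ℝ) / (n : ℝ)) * ((m' : ℝ) / (n' : ℝ)) > 0)
    (hx : |x - (m : ℝ) / (n : ℝ)| < |(m : ℝ) / (n : ℝ)| * (1 / 2 ^ p))
    (hy : |y - (m' : ℝ) / (n' : ℝ)| < |(m' : ℝ) / (n' : ℝ)| * (1 / 2 ^ p)) :
    |(x + y) - ((m * n' + m' * n : ℤ) : ℝ) / ((n * n' : ℤ) : ℝ)| <
      |((m * n' + m' * n : ℤ) : ℝ) / ((n * n' : ℤ) : ℝ)| * (1 / 2 ^ p) := by
  have hnr : (n : ℝ) ≠ 0 := Int.cast_ne_zero.mpr hn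
  have hnr' : (n' : ℝ) ≠ 0 := Int.cast_ne_zero.mpr hn'
  set a := (m : ℝ) / n
  set b := (m' : ℝ) / n'
  have hsum : ((m * n' + m' * n : ℤ) : ℝ) / ((n * n' : ℤ) : ℝ) = a + b := by
    push_cast
    rw [div_add_div _ _ hnr hnr']; ring
  rw [hsum]
  have habs : |a + b| = |a| + |b| := by
    rcases (mul_pos_iff.mp hsign) with ⟨ha, hb⟩ | ⟨ha, hb⟩
    · rw [abs_of_pos ha, abs_of_pos hb, abs_of_pos (by linarith)]
    · rw [abs_of_neg ha, abs_of_neg hb, abs_of_neg (by linarith)]; ring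
  have h1 : |(x + y) - (a + b)| ≤ |x - a| + |y - b| := by
    calc |(x + y) - (a + b)| = |(x - a) + (y - b)| := by ring_nf
      _ ≤ _ := abs_add_le _ _
  rw [habs]
  calc |(x + y) - (a + b)| ≤ |x - a| + |y - b| := h1
    _ < |a| * (1 / 2 ^ p) + |b| * (1 / 2 ^ p) := by linarith
    _ = (|a| + |b|) * (1 / 2 ^ p) := by ring
end

section
/- Let x and y be real numbers represented by (m,n,p) and (m',n',p) respectively, and suppose the rational approximations have opposite signs, i.e. (m/n)·(m'/n') < 0, and |m/n| ≠ |m'/n'|. Let r = min(|m/n|, |m'/n'|) / max(|m/n|, |m'/n'|), and let i be a natural number with p ≥ i and 2^i ≥ (1 + r)/(1 - r). Then x + y is represented by (m·n' + m'·n, n·n', p-i); that is, |(x+y) - (m·n' + m'·n)/(n·n')| < |(m·n' + m'·n)/(n·n')| * (1/2^(p-i)). -/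
/-- If `x` and `y` are represented by `(m, n, p)` and `(m', n', p)`, the rational
approximations have opposite signs and distinct absolute values, and `i ≤ p` is a
natural number with `2 ^ i ≥ (1 + r) / (1 - r)` where
`r = min |m/n| |m'/n'| / max |m/n| |m'/n'|`, then `x + y` is represented by
`(m * n' + m' * n, n * n', p - i)`. -/
theorem add_represented_opposite_sign (x y : ℝ) (m n m' n' : ℤ) (p i : ℕ)
    (hm : m ≠ 0) (hn : n ≠ 0) (hm' : m' ≠ 0) (hn' : n' ≠ 0)
    (hsign : ((m : ℝ) / (n : ℝ)) * ((m' : ℝ) / (n' : ℝ)) < 0)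
    (habs : |(m : ℝ) / (n : ℝ)| ≠ |(m' : ℝ) / (n' : ℝ)|)
    (hip : i ≤ p)
    (hi : (2 : ℝ) ^ i ≥
      (1 + min |(m : ℝ) / (n : ℝ)| |(m' : ℝ) / (n' : ℝ)| /
            max |(m : ℝ) / (n : ℝ)| |(m' : ℝ) / (n' : ℝ)|) /
      (1 - min |(m : ℝ) / (n : ℝ)| |(m' : ℝ) / (n' : ℝ)| /
            max |(m : ℝ) / (n : ℝ)| |(m' : ℝ) / (n' : ℝ)|))
    (hx : |x - (m : ℝ) / (n : ℝ)| < |(m : ℝ) / (n : ℝ)| * (1 / 2 ^ p))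
    (hy : |y - (m' : ℝ) / (n' : ℝ)| < |(m' : ℝ) / (n' : ℝ)| * (1 / 2 ^ p)) :
    |(x + y) - ((m * n' + m' * n : ℤ) : ℝ) / ((n * n' : ℤ) : ℝ)| <
      |((m * n' + m' * n : ℤ) : ℝ) / ((n * n' : ℤ) : ℝ)| * (1 / 2 ^ (p - i)) := by

  set A := (m : ℝ) / (n : ℝ) with hAdef
  set B := (m' : ℝ) / (n' : ℝ) with hBdef
  set s := min |A| |B| with hsdef
  set M := max |A| |B| with hMdef
  have hnR : (n : ℝ) ≠ 0 := Int.cast_ne_zero.mpr hn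
  have hn'R : (n' : ℝ) ≠ 0 := Int.cast_ne_zero.mpr hn'
  have hsum : ((m * n' + m' * n : ℤ) : ℝ) / ((n * n' : ℤ) : ℝ) = A + B := by
    rw [hAdef, hBdef]; push_cast; field_simp
  rw [hsum]
  have hAne : A ≠ 0 := left_ne_zero_of_mul hsign.ne
  have hMpos : 0 < M := lt_of_lt_of_le (abs_pos.mpr hAne) (le_max_left _ _)
  have hsM : s < M := by
    rcases habs.lt_or_gt with h | h
    · simpa [hsdef, hMdef, min_eq_left h.le, max_eq_right h.le] using h
    · simpa [hsdef, hMdef, min_eq_right h.le, max_eq_left h.le] using h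
  have hs0 : 0 ≤ s := le_min (abs_nonneg _) (abs_nonneg _)
  have habsum : |A + B| = M - s := by
    have h1 : |A + B| = |(|A| - |B|)| := by
      rcases mul_neg_iff.mp hsign with ⟨hA, hB⟩ | ⟨hA, hB⟩
      · rw [abs_of_pos hA, abs_of_neg hB]; ring_nf
      · rw [abs_of_neg hA, abs_of_pos hB, abs_sub_comm]; ring_nf
    rw [h1, ← max_sub_min_eq_abs, max_comm, min_comm]
  have key : M + s ≤ 2 ^ i * (M - s) := by
    have hr1 : s / M < 1 := (div_lt_one hMpos).mpr hsM
    have h2 : 1 + s / M ≤ 2 ^ i * (1 - s / M) := (div_le_iff₀ (by linarith)).mp hi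
    have hscancel : s / M * M = s := div_mul_cancel₀ s hMpos.ne'
    nlinarith [mul_le_mul_of_nonneg_right h2 hMpos.le]
  have h2p : (0:ℝ) < 2 ^ p := by positivity
  have h2pi : (0:ℝ) < 2 ^ (p - i) := by positivity
  have hpe : (2:ℝ) ^ (p - i) * 2 ^ i = 2 ^ p := by
    rw [← pow_add, Nat.sub_add_cancel hip]
  have hms : |A| + |B| = M + s := by
    rw [hsdef, hMdef, add_comm M, min_add_max]
  calc |x + y - (A + B)| = |(x - A) + (y - B)| := by ring_nf
    _ ≤ |x - A| + |y - B| := abs_add_le _ _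
    _ < |A| * (1 / 2 ^ p) + |B| * (1 / 2 ^ p) := add_lt_add hx hy
    _ = (M + s) / 2 ^ p := by rw [← hms]; ring
    _ ≤ (M - s) / 2 ^ (p - i) := by
        rw [div_le_div_iff₀ h2p h2pi]
        nlinarith [mul_le_mul_of_nonneg_right key h2pi.le]
    _ = |A + B| * (1 / 2 ^ (p - i)) := by rw [habsum]; ring
end

section
/- Let x be a real number represented by (m,n,p) with m/n > 0, and let a be an integer such that 2^(a-1) ≤ m/n < 2^a. Let N = ⌈log₂(log₂(2^(p+3)+1))⌉ + 1, assume p ≥ 4N, and define the Newton–Raphson sequence y₀ = 2^(⌈a/2⌉+1), y_{k+1} = (y_k² + m/n)/(2·y_k). Then √x is represented by the N-th term of this sequence with precision p - 4N; that is, |√x - y_N| < |y_N| * (1/2^(p-4N)). -/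
set_option maxHeartbeats 2000000

private lemma newton_step_aux (d s Y P : ℝ) (hs : 0 < s) (hge : s ≤ Y) (hP : 0 < P)
    (hd : d * P ≤ s) (hdnn : 0 ≤ d) : d ^ 2 / (2 * Y) ≤ s / (P ^ 2 * 2) := by
  rw [div_le_div_iff₀ (by linarith) (by positivity)]
  nlinarith [mul_le_mul hd hd (mul_nonneg hdnn hP.le) hs.le]



/-- Newton–Raphson approximation of `√x`: if `x` is represented by `(m, n, p)` with
`m/n > 0`, `2 ^ (a - 1) ≤ m/n < 2 ^ a`, `N = ⌈log₂ (log₂ (2 ^ (p + 3) + 1))⌉ + 1`,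
`p ≥ 4 N`, and `y` is the Newton–Raphson sequence with `y 0 = 2 ^ (⌈a / 2⌉ + 1)` and
`y (k + 1) = (y k ^ 2 + m / n) / (2 * y k)`, then `√x` is represented by `y N` with
precision `p - 4 N`. -/
theorem sqrt_newton_raphson_represented (x : ℝ) (m n : ℤ) (p : ℕ) (a : ℤ) (N : ℕ)
    (y : ℕ → ℝ) (hm : m ≠ 0) (hn : n ≠ 0)
    (hpos : 0 < (m : ℝ) / (n : ℝ))
    (ha₁ : (2 : ℝ) ^ (a - 1) ≤ (m : ℝ) / (n : ℝ))
    (ha₂ : (m : ℝ) / (n : ℝ) < (2 : ℝ) ^ a)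
    (hN : N = ⌈Real.logb 2 (Real.logb 2 (2 ^ (p + 3) + 1))⌉₊ + 1)
    (hp : 4 * N ≤ p)
    (hy0 : y 0 = (2 : ℝ) ^ (⌈(a : ℝ) / 2⌉ + 1))
    (hyrec : ∀ k, y (k + 1) = (y k ^ 2 + (m : ℝ) / (n : ℝ)) / (2 * y k))
    (hx : |x - (m : ℝ) / (n : ℝ)| < |(m : ℝ) / (n : ℝ)| * (1 / 2 ^ p)) :
    |Real.sqrt x - y N| < |y N| * (1 / 2 ^ (p - 4 * N)) := by
  set r : ℝ := (m : ℝ) / (n : ℝ) with hrdef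
  have hr : 0 < r := hpos
  set s : ℝ := Real.sqrt r with hsdef
  have hs : 0 < s := Real.sqrt_pos.mpr hr
  have hs2 : s ^ 2 = r := Real.sq_sqrt hr.le
  clear_value r s
  set c : ℤ := ⌈(a : ℝ) / 2⌉ with hcdef
  -- integer inequalities about c
  have hca : a ≤ 2 * c := by
    have h := Int.le_ceil ((a : ℝ) / 2)
    have h2 : (a : ℝ) ≤ 2 * (c : ℝ) := by rw [hcdef]; linarith
    exact_mod_cast h2
  have hca' : 2 * c ≤ a + 1 := by
    have h := Int.ceil_lt_add_one ((a : ℝ) / 2)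
    have h2 : 2 * (c : ℝ) < (a : ℝ) + 2 := by rw [hcdef]; linarith
    have h3 : 2 * c < a + 2 := by exact_mod_cast h2
    omega
  set u : ℝ := (2 : ℝ) ^ (c - 1) with hudef
  have hu : 0 < u := zpow_pos (by norm_num) _
  -- bounds on s : u ≤ s < 2 u
  have hsl : u ≤ s := by
    have h1 : u ^ 2 ≤ s ^ 2 := by
      rw [hs2, hudef, ← zpow_natCast ((2:ℝ) ^ (c-1)), ← zpow_mul]
      calc (2:ℝ) ^ ((c - 1) * (2:ℕ)) ≤ 2 ^ (a - 1) := by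
            apply zpow_le_zpow_right₀ one_le_two; push_cast; omega
        _ ≤ r := ha₁
    nlinarith
  have hsu : s < 2 * u := by
    have h2u : (2:ℝ) * u = 2 ^ c := by
      rw [hudef, show (c:ℤ) = 1 + (c - 1) by ring, zpow_add₀ (by norm_num : (2:ℝ) ≠ 0)]
      norm_num
    have h1 : s ^ 2 < (2 * u) ^ 2 := by
      rw [hs2, h2u, ← zpow_natCast ((2:ℝ) ^ c), ← zpow_mul]
      calc r < 2 ^ a := ha₂
        _ ≤ (2:ℝ) ^ (c * (2:ℕ)) := by
            apply zpow_le_zpow_right₀ one_le_two; push_cast; omega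
    nlinarith
  clear_value c
  have hy0' : y 0 = 4 * u := by
    rw [hy0, hudef, show c + 1 = 2 + (c - 1) by ring,
      zpow_add₀ (by norm_num : (2:ℝ) ≠ 0)]
    norm_num
  clear_value u
  -- positivity of the sequence
  have hypos : ∀ k, 0 < y k := by
    intro k
    induction k with
    | zero => rw [hy0']; linarith
    | succ k ih =>
      rw [hyrec k]
      exact div_pos (by nlinarith [sq_nonneg (y k)]) (by linarith)
  have hdrec : ∀ k, y (k + 1) - s = (y k - s) ^ 2 / (2 * y k) := by
    intro k
    have hk := (hypos k).ne'
    rw [hyrec k, ← hs2]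
    field_simp
    ring
  have hyges : ∀ k, s ≤ y (k + 1) := by
    intro k
    have h := hdrec k
    have h2 : (0:ℝ) ≤ (y k - s) ^ 2 / (2 * y k) :=
      div_nonneg (sq_nonneg _) (by linarith [hypos k])
    linarith
  -- first two error bounds
  have hd1 : y 1 - s ≤ 9 / 8 * s := by
    have h := hdrec 0
    rw [h, hy0', div_le_iff₀ (by linarith : (0:ℝ) < 2 * (4 * u))]
    nlinarith [mul_nonneg (sub_nonneg.mpr hsl) (by linarith : (0:ℝ) ≤ 7 * u - s)]
  have hd2 : y 2 - s ≤ s / 2 := by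
    have h := hdrec 1
    have hge := hyges 0
    rw [h, div_le_iff₀ (by linarith [hypos 1] : (0:ℝ) < 2 * y 1)]
    nlinarith [mul_nonneg (by linarith : (0:ℝ) ≤ 9 / 8 * s - (y 1 - s))
      (by linarith : (0:ℝ) ≤ y 1 - s)]
  -- quadratic convergence
  have hind : ∀ j, y (j + 2) - s ≤ s / 2 ^ (2 ^ (j + 1) - 1) := by
    intro j
    induction j with
    | zero => simpa using hd2
    | succ j ih =>
      have h := hdrec (j + 2)
      have hge := hyges (j + 1)
      have hyp := hypos (j + 2)
      have hP : (0:ℝ) < 2 ^ (2 ^ (j + 1) - 1) := by positivity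
      have hpow : (2:ℝ) ^ (2 ^ (j + 2) - 1) = ((2:ℝ) ^ (2 ^ (j + 1) - 1)) ^ 2 * 2 := by
        rw [← pow_mul, ← pow_succ]
        congr 1
        have h2 : (2:ℕ) ^ (j + 2) = 2 * 2 ^ (j + 1) := by ring
        have h3 : 1 ≤ (2:ℕ) ^ (j + 1) := Nat.one_le_two_pow
        omega
      have ihm : (y (j + 2) - s) * 2 ^ (2 ^ (j + 1) - 1) ≤ s :=
        (le_div_iff₀ hP).mp ih
      have hdnn : (0:ℝ) ≤ y (j + 2) - s := by linarith
      rw [show j + 1 + 2 = (j + 2) + 1 from rfl, h, hpow]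
      exact newton_step_aux _ _ _ _ hs hge hP ihm hdnn
  -- 2 ^ (N - 1) ≥ p + 4
  obtain ⟨D, hceil, hND⟩ :
      ∃ D : ℕ, Real.logb 2 (Real.logb 2 (2 ^ (p + 3) + 1)) ≤ (D : ℝ) ∧ N = D + 1 :=
    ⟨_, Nat.le_ceil _, hN⟩
  clear hN
  have hL : ((p : ℝ) + 3) < Real.logb 2 (2 ^ (p + 3) + 1) := by
    have h1 : Real.logb 2 ((2:ℝ) ^ (p + 3)) = ((p : ℝ) + 3) := by
      rw [Real.logb_pow 2 2 (p + 3), Real.logb_self_eq_one (by norm_num)]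
      push_cast; ring
    rw [← h1]
    exact Real.logb_lt_logb (by norm_num) (by positivity)
      (by linarith [pow_pos (by norm_num : (0:ℝ) < 2) (p+3)])
  have hL0 : (0:ℝ) < Real.logb 2 (2 ^ (p + 3) + 1) := lt_trans (by positivity) hL
  have h2D : Real.logb 2 (2 ^ (p + 3) + 1) ≤ (2:ℝ) ^ D := by
    calc Real.logb 2 (2 ^ (p + 3) + 1)
        = (2:ℝ) ^ Real.logb 2 (Real.logb 2 (2 ^ (p + 3) + 1)) :=
          (Real.rpow_logb (by norm_num) (by norm_num) hL0).symm
      _ ≤ (2:ℝ) ^ (D : ℝ) := Real.rpow_le_rpow_of_exponent_le one_le_two hceil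
      _ = (2:ℝ) ^ D := Real.rpow_natCast 2 D
  have hD4 : p + 4 ≤ 2 ^ D := by
    have h1 : ((p : ℝ) + 3) < ((2 ^ D : ℕ) : ℝ) := by push_cast; linarith
    have h2 : p + 3 < 2 ^ D := by exact_mod_cast h1
    omega
  have hN2 : 2 ≤ N := by
    rcases Nat.lt_or_ge N 2 with h | h
    · exfalso
      have hD0 : D = 0 := by omega
      have h1 : (2:ℕ) ^ D = 1 := by rw [hD0]; rfl
      omega
    · exact h
  -- error bound at step N
  have hdN : y N - s ≤ s / 2 ^ (p + 3) := by
    obtain ⟨j, hj⟩ : ∃ j, N = j + 2 := ⟨N - 2, by omega⟩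
    have hexp : p + 3 ≤ 2 ^ (j + 1) - 1 := by
      have hjD : j + 1 = D := by omega
      rw [hjD]; omega
    calc y N - s ≤ s / 2 ^ (2 ^ (j + 1) - 1) := by rw [hj]; exact hind j
      _ ≤ s / 2 ^ (p + 3) := by
          exact div_le_div_of_nonneg_left hs.le (by positivity)
            (pow_le_pow_right₀ one_le_two hexp)
  -- facts about x
  have hrabs : |r| = r := abs_of_pos hr
  rw [hrabs] at hx
  have hP : (0:ℝ) < 2 ^ p := by positivity
  have hp8 : 8 ≤ p := by omega
  have hx0 : 0 < x := by
    have h1 := (abs_lt.mp hx).1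
    have h256 : (1:ℝ) < 2 ^ p := one_lt_pow₀ one_lt_two (by omega)
    have h2 : r * (1 / 2 ^ p) < r := by
      rw [mul_one_div, div_lt_iff₀ hP]
      nlinarith [mul_lt_mul_of_pos_left h256 hr]
    linarith
  have hsx : |Real.sqrt x - s| * s ≤ |x - r| := by
    have hxx : Real.sqrt x ^ 2 = x := Real.sq_sqrt hx0.le
    have hxnn : 0 ≤ Real.sqrt x := Real.sqrt_nonneg x
    have key : |Real.sqrt x - s| * (Real.sqrt x + s) = |x - r| := by
      rw [← abs_of_nonneg (by linarith : (0:ℝ) ≤ Real.sqrt x + s), ← abs_mul]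
      congr 1
      linear_combination hxx - hs2
    nlinarith [abs_nonneg (Real.sqrt x - s)]
  -- final assembly
  set q : ℕ := p - 4 * N with hq
  clear_value q
  have hpq : p = q + 4 * N := by omega
  have hyN : 0 < y N := hypos N
  have hyNs : s ≤ y N := by
    obtain ⟨k, hk⟩ : ∃ k, N = k + 1 := ⟨N - 1, by omega⟩
    rw [hk]; exact hyges k
  have h2p : (2:ℝ) ^ p = 2 ^ q * 2 ^ (4 * N) := by rw [hpq, pow_add]
  have h4N : (256:ℝ) ≤ 2 ^ (4 * N) := by
    calc (256:ℝ) = 2 ^ 8 := by norm_num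
      _ ≤ 2 ^ (4 * N) := pow_le_pow_right₀ one_le_two (by omega)
  have hQ : (0:ℝ) < 2 ^ q := by positivity
  have B : |Real.sqrt x - s| * 2 ^ p < s := by
    have h1 : |x - r| * 2 ^ p < s ^ 2 := by
      rw [hs2]
      have h2 := hx
      rw [mul_one_div] at h2
      calc |x - r| * 2 ^ p < r / 2 ^ p * 2 ^ p := by
            exact mul_lt_mul_of_pos_right h2 hP
        _ = r := by field_simp
    nlinarith [abs_nonneg (Real.sqrt x - s), mul_le_mul_of_nonneg_right hsx hP.le]
  have C : (y N - s) * 2 ^ p * 8 ≤ s := by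
    have h1 : (y N - s) * 2 ^ (p + 3) ≤ s := (le_div_iff₀ (by positivity)).mp hdN
    have h2 : (2:ℝ) ^ (p + 3) = 2 ^ p * 8 := by rw [pow_add]; norm_num
    nlinarith
  have tri : |Real.sqrt x - y N| ≤ |Real.sqrt x - s| + (y N - s) := by
    calc |Real.sqrt x - y N| ≤ |Real.sqrt x - s| + |s - y N| := abs_sub_le _ _ _
      _ = |Real.sqrt x - s| + (y N - s) := by
          rw [abs_sub_comm s (y N), abs_of_nonneg (by linarith : (0:ℝ) ≤ y N - s)]
  have main : |Real.sqrt x - y N| * 2 ^ p < 2 * s := by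
    have t1 : |Real.sqrt x - y N| * 2 ^ p ≤ (|Real.sqrt x - s| + (y N - s)) * 2 ^ p :=
      mul_le_mul_of_nonneg_right tri hP.le
    nlinarith
  have final : |Real.sqrt x - y N| * 2 ^ q < y N := by
    by_contra hcon
    push_neg at hcon
    have h2 : y N * 2 ^ (4 * N) ≤ |Real.sqrt x - y N| * 2 ^ q * 2 ^ (4 * N) :=
      mul_le_mul_of_nonneg_right hcon (by positivity)
    have h3 : y N * 256 ≤ y N * 2 ^ (4 * N) := mul_le_mul_of_nonneg_left h4N hyN.le
    have h4 : |Real.sqrt x - y N| * 2 ^ q * 2 ^ (4 * N) = |Real.sqrt x - y N| * 2 ^ p := by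
      rw [h2p]; ring
    nlinarith
  rw [abs_of_pos hyN, mul_one_div, lt_div_iff₀ hQ]
  exact final
end

section
/- Let x be a real number represented by (m,n,p) with 0 < m/n < 1. Let N be an even natural number with N > 2^((p+11)/3), and assume p ≥ 2⌈log₂(N/2)⌉ + 3. Then exp(x) is approximated by A = (N/(N - 2m/n))^(N/2) with relative error less than 1/2^(p - 2⌈log₂(N/2)⌉ - 3); that is, |exp(x) - A| < |A| * (1/2^(p - 2⌈log₂(N/2)⌉ - 3)). -/
set_option maxHeartbeats 1600000 in
/-- Riemann-sum approximation of `exp x` in the base interval `0 < m/n < 1`: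
if `x` is represented by `(m, n, p)`, `N` is even with `N > 2 ^ ((p + 11) / 3)`
(real power), and `p ≥ 2 ⌈log₂ (N / 2)⌉ + 3`, then
`A = (N / (N - 2 m / n)) ^ (N / 2)` approximates `exp x` with relative error less
than `1 / 2 ^ (p - 2 ⌈log₂ (N / 2)⌉ - 3)`. -/
theorem exp_represented_pos_base (x : ℝ) (m n : ℤ) (p N : ℕ)
    (hm : m ≠ 0) (hn : n ≠ 0)
    (hx : |x - (m : ℝ) / (n : ℝ)| < |(m : ℝ) / (n : ℝ)| * (1 / 2 ^ p))
    (hmn₀ : 0 < (m : ℝ) / (n : ℝ)) (hmn₁ : (m : ℝ) / (n : ℝ) < 1)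
    (hNeven : Even N)
    (hN : (N : ℝ) > (2 : ℝ) ^ (((p : ℝ) + 11) / 3))
    (hp : 2 * Nat.clog 2 (N / 2) + 3 ≤ p) :
    |Real.exp x - ((N : ℝ) / ((N : ℝ) - 2 * ((m : ℝ) / (n : ℝ)))) ^ (N / 2)| <
      |((N : ℝ) / ((N : ℝ) - 2 * ((m : ℝ) / (n : ℝ)))) ^ (N / 2)| *
        (1 / 2 ^ (p - 2 * Nat.clog 2 (N / 2) - 3)) := by
  obtain ⟨k, hk⟩ := hNeven
  set μ : ℝ := (m : ℝ) / (n : ℝ) with hμdef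
  have hK : N = 2 * k := by omega
  have hN2 : N / 2 = k := by omega
  rw [hN2]
  rw [hN2] at hp
  set c := Nat.clog 2 k with hcdef
  have hp3 : 3 ≤ p := by omega
  -- N > 16
  have h16 : (16 : ℝ) < (N : ℝ) := by
    have h1 : (2 : ℝ) ^ (4 : ℝ) < (2 : ℝ) ^ (((p : ℝ) + 11) / 3) := by
      rw [Real.rpow_lt_rpow_left_iff one_lt_two]
      have : (3 : ℝ) ≤ (p : ℝ) := by exact_mod_cast hp3
      linarith
    have h2 : (2 : ℝ) ^ (4 : ℝ) = 16 := by
      rw [show (4 : ℝ) = ((4 : ℕ) : ℝ) by norm_num, Real.rpow_natCast]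
      norm_num
    linarith
  have hk9 : 9 ≤ k := by
    have : 16 < N := by exact_mod_cast h16
    omega
  have hk9' : (9 : ℝ) ≤ (k : ℝ) := by exact_mod_cast hk9
  have hk0 : (0 : ℝ) < (k : ℝ) := by linarith
  -- cube bound : 2^(p+11) < N^3, so 2048 * 2^p < 8 k^3
  have hcube : (2 : ℝ) ^ (p + 11) < 8 * (k : ℝ) ^ 3 := by
    have h1 : ((2 : ℝ) ^ (((p : ℝ) + 11) / 3)) ^ (3 : ℕ) = (2 : ℝ) ^ ((p : ℝ) + 11) := by
      rw [← Real.rpow_natCast ((2 : ℝ) ^ (((p : ℝ) + 11) / 3)) 3,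
        ← Real.rpow_mul (by norm_num : (0:ℝ) ≤ 2)]
      norm_num
    have h2 : (2 : ℝ) ^ ((p : ℝ) + 11) = (2 : ℝ) ^ (p + 11) := by
      rw [show ((p : ℝ) + 11) = ((p + 11 : ℕ) : ℝ) by push_cast; ring, Real.rpow_natCast]
    have h3 : ((2 : ℝ) ^ (((p : ℝ) + 11) / 3)) ^ (3 : ℕ) < (N : ℝ) ^ (3 : ℕ) := by
      gcongr
    have h4 : (N : ℝ) = 2 * (k : ℝ) := by exact_mod_cast hK
    rw [h1, h2, h4] at h3
    nlinarith [h3]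
  -- clog bound
  have hck : (k : ℝ) ≤ 2 ^ c := by exact_mod_cast Nat.le_pow_clog one_lt_two k
  -- power splitting
  have hqsplit : (2 : ℝ) ^ p = 2 ^ (p - 2 * c - 3) * 2 ^ (2 * c + 3) := by
    rw [← pow_add]
    congr 1
    omega
  have hP8 : (8 : ℝ) ≤ (2 : ℝ) ^ p :=
    calc (8:ℝ) = 2 ^ 3 := by norm_num
    _ ≤ 2 ^ p := by exact pow_le_pow_right₀ one_le_two hp3
  have hP0 : (0 : ℝ) < (2 : ℝ) ^ p := by positivity
  -- setup t and B
  set t : ℝ := μ / (k : ℝ) with htdef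
  have ht0 : 0 < t := div_pos hmn₀ hk0
  have htμ : t * (k : ℝ) = μ := div_mul_cancel₀ _ (ne_of_gt hk0)
  have ht9 : t ≤ 1 / 9 := by
    rw [htdef, div_le_div_iff₀ hk0 (by norm_num)]
    nlinarith
  have h1t : (8 : ℝ) / 9 ≤ 1 - t := by linarith
  have h1t0 : (0 : ℝ) < 1 - t := by linarith
  have hB : (N : ℝ) / ((N : ℝ) - 2 * μ) = 1 / (1 - t) := by
    have h4 : (N : ℝ) = 2 * (k : ℝ) := by exact_mod_cast hK
    rw [h4, div_eq_div_iff (by nlinarith) (by linarith)]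
    nlinarith
  rw [hB]
  set B : ℝ := 1 / (1 - t) with hBdef
  have hB0 : 0 < B := by positivity
  set A : ℝ := B ^ k with hAdef
  have hA0 : 0 < A := by positivity
  rw [abs_of_pos hA0]
  set L : ℝ := (k : ℝ) * Real.log B with hLdef
  have hexpL : Real.exp L = A := by
    rw [hLdef, Real.exp_nat_mul, Real.exp_log hB0]
  -- log bounds
  have hlogB_low : t ≤ Real.log B := by
    have h1 := Real.log_le_sub_one_of_pos h1t0
    have h2 : Real.log B = - Real.log (1 - t) := by rw [hBdef, one_div, Real.log_inv]
    linarith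
  have hlogB_high : Real.log B ≤ t / (1 - t) := by
    have h1 := Real.log_le_sub_one_of_pos hB0
    have h2 : B - 1 = t / (1 - t) := by
      rw [hBdef]
      field_simp
      ring
    linarith
  have hLlow : μ ≤ L := by
    have h := mul_le_mul_of_nonneg_left hlogB_low hk0.le
    rw [hLdef]
    linarith [h, mul_comm t (k : ℝ), htμ]
  have hLhigh : L ≤ μ + 2 / (k : ℝ) := by
    have h1 : L ≤ (k : ℝ) * (t / (1 - t)) := by
      rw [hLdef]
      exact mul_le_mul_of_nonneg_left hlogB_high hk0.le
    have h2 : (k : ℝ) * (t / (1 - t)) = μ / (1 - t) := by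
      rw [mul_div_assoc']
      congr 1
      rw [mul_comm]
      exact htμ
    have h3 : μ / (1 - t) ≤ μ + 2 / (k : ℝ) := by
      rw [div_le_iff₀ h1t0]
      have hμt : μ * t ≤ 1 / (k : ℝ) := by
        have heq : μ * t = μ ^ 2 / (k : ℝ) := by rw [htdef]; ring
        rw [heq]
        gcongr
        nlinarith
      have h2k : 0 < 2 / (k : ℝ) := by positivity
      have hkt : 2 / (k:ℝ) * t ≤ 2 / (k:ℝ) * (1/9) := by nlinarith
      have e1 : (μ + 2/(k:ℝ)) * (1 - t) = μ - μ*t + 2/(k:ℝ) - 2/(k:ℝ)*t := by ring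
      have e2 : (2:ℝ)/(k:ℝ) = 2*(1/(k:ℝ)) := by ring
      have e3 : (2:ℝ)/(k:ℝ)*(1/9) = (2/9)*(1/(k:ℝ)) := by ring
      have e4 : (0:ℝ) < 1/(k:ℝ) := by positivity
      linarith [hμt, hkt, e1, e2, e3, e4]
    linarith
  -- distance bound
  have hxμ : |x - μ| < 1 / 2 ^ p := by
    have : |μ| * (1 / 2 ^ p) < 1 * (1 / 2 ^ p) := by
      apply mul_lt_mul_of_pos_right _ (by positivity)
      rw [abs_of_pos hmn₀]; exact hmn₁
    linarith
  have hxL : |x - L| < 1 / 2 ^ p + 2 / (k : ℝ) := by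
    have h1 : |x - L| ≤ |x - μ| + |μ - L| := abs_sub_le x μ L
    have h2 : |μ - L| = L - μ := by
      rw [abs_of_nonpos (by linarith)]; ring
    rw [h2] at h1
    have : L - μ ≤ 2 / (k : ℝ) := by linarith
    linarith
  have hD1 : |x - L| ≤ 1 := by
    have h1 : (1 : ℝ) / 2 ^ p ≤ 1 / 8 := by
      apply div_le_div_of_nonneg_left (by norm_num) (by norm_num) hP8
    have h2 : 2 / (k : ℝ) ≤ 2 / 9 := by
      apply div_le_div_of_nonneg_left (by norm_num) (by norm_num) hk9'
    linarith
  -- main estimate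
  have key : |Real.exp x - A| ≤ A * (2 * |x - L|) := by
    have heq : Real.exp x - A = A * (Real.exp (x - L) - 1) := by
      rw [mul_sub, mul_one, ← hexpL, ← Real.exp_add]
      congr 2
      ring
    rw [heq, abs_mul, abs_of_pos hA0]
    exact mul_le_mul_of_nonneg_left (Real.abs_exp_sub_one_le hD1) hA0.le
  have final : A * (2 * |x - L|) < A * (1 / 2 ^ (p - 2 * c - 3)) := by
    apply mul_lt_mul_of_pos_left _ hA0
    have h1 : 2 * |x - L| < 2 / 2 ^ p + 4 / (k : ℝ) := by
      have e1 : (2:ℝ) / 2 ^ p = 2 * (1 / 2 ^ p) := by ring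
      have e2 : (4:ℝ) / (k : ℝ) = 2 * (2 / (k : ℝ)) := by ring
      linarith [hxL, e1, e2]
    have h2 : (1 : ℝ) / 2 ^ (p - 2 * c - 3) = 2 ^ (2 * c + 3) / 2 ^ p := by
      rw [hqsplit]
      rw [div_eq_div_iff (by positivity) (by positivity)]
      ring
    rw [h2]
    have h3 : 8 * (k : ℝ) ^ 2 ≤ (2 : ℝ) ^ (2 * c + 3) := by
      have : (2 : ℝ) ^ (2 * c + 3) = 8 * ((2 : ℝ) ^ c) ^ 2 := by
        rw [pow_add, mul_comm 2 c, pow_mul]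
        ring
      nlinarith [hck, pow_pos (show (0:ℝ) < 2 by norm_num) c]
    have h4 : 2 / (2:ℝ) ^ p + 4 / (k : ℝ) < 8 * (k : ℝ) ^ 2 / 2 ^ p := by
      rw [div_add_div _ _ (ne_of_gt hP0) (ne_of_gt hk0), div_lt_div_iff₀ (by positivity) hP0]
      have h2048 : (2 : ℝ) ^ (p + 11) = 2048 * 2 ^ p := by
        rw [pow_add]; ring
      rw [h2048] at hcube
      have h5 : 2 * (k:ℝ) + 2 ^ p * 4 < 8 * (k:ℝ) ^ 3 := by nlinarith [hcube, hk9', hP0]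
      nlinarith [mul_lt_mul_of_pos_right h5 hP0]
    calc 2 * |x - L| < 2 / 2 ^ p + 4 / (k : ℝ) := h1
      _ < 8 * (k : ℝ) ^ 2 / 2 ^ p := h4
      _ ≤ 2 ^ (2 * c + 3) / 2 ^ p := by gcongr
  linarith [lt_of_le_of_lt key final]
end

section
/- Let x be a real number represented by (m,n,p) with -1 < m/n < 0. Let N be an even natural number with N > 2^((p+11)/3), and assume p ≥ 2⌈log₂(N/2)⌉ + 4. Then exp(x) is approximated by A = 1/(N/(N + 2m/n))^(N/2) with relative error less than 1/2^(p - 2⌈log₂(N/2)⌉ - 4); that is, |exp(x) - A| < |A| * (1/2^(p - 2⌈log₂(N/2)⌉ - 4)). -/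
set_option maxHeartbeats 1600000 in
/-- Riemann-sum approximation of `exp x` in the base interval `-1 < m/n < 0`:
if `x` is represented by `(m, n, p)`, `N` is even with `N > 2 ^ ((p + 11) / 3)`
(real power), and `p ≥ 2 ⌈log₂ (N / 2)⌉ + 4`, then
`A = 1 / (N / (N + 2 m / n)) ^ (N / 2)` approximates `exp x` with relative error
less than `1 / 2 ^ (p - 2 ⌈log₂ (N / 2)⌉ - 4)`. -/
theorem exp_represented_neg_base (x : ℝ) (m n : ℤ) (p N : ℕ)
    (hm : m ≠ 0) (hn : n ≠ 0)
    (hx : |x - (m : ℝ) / (n : ℝ)| < |(m : ℝ) / (n : ℝ)| * (1 / 2 ^ p))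
    (hmn₀ : -1 < (m : ℝ) / (n : ℝ)) (hmn₁ : (m : ℝ) / (n : ℝ) < 0)
    (hNeven : Even N)
    (hN : (N : ℝ) > (2 : ℝ) ^ (((p : ℝ) + 11) / 3))
    (hp : 2 * Nat.clog 2 (N / 2) + 4 ≤ p) :
    |Real.exp x - 1 / ((N : ℝ) / ((N : ℝ) + 2 * ((m : ℝ) / (n : ℝ)))) ^ (N / 2)| <
      |1 / ((N : ℝ) / ((N : ℝ) + 2 * ((m : ℝ) / (n : ℝ)))) ^ (N / 2)| *
        (1 / 2 ^ (p - 2 * Nat.clog 2 (N / 2) - 4)) := by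
  set r : ℝ := (m : ℝ) / (n : ℝ) with hrdef
  clear hm hn
  clear hrdef
  clear_value r
  set k : ℕ := N / 2 with hkdef
  set c : ℕ := Nat.clog 2 k with hcdef
  set q : ℕ := p - 2 * c - 4 with hqdef
  have hclog_nat : k ≤ 2 ^ c := Nat.le_pow_clog (by norm_num) k
  clear_value c
  clear hcdef
  have hqp : p = q + (2 * c + 4) := by omega
  clear_value q
  clear hqdef hp
  have hp4 : 4 ≤ p := by omega
  have hrabs : |r| < 1 := by rw [abs_lt]; constructor <;> [linarith; linarith]
  -- N ≥ 33
  have hN33 : (33 : ℕ) ≤ N := by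
    have h5 : (2 : ℝ) ^ ((5:ℕ) : ℝ) ≤ (2:ℝ) ^ (((p : ℝ) + 11) / 3) := by
      apply Real.rpow_le_rpow_of_exponent_le (by norm_num)
      have : (4 : ℝ) ≤ (p : ℝ) := by exact_mod_cast hp4
      push_cast
      linarith
    rw [Real.rpow_natCast] at h5
    have h32 : (32 : ℝ) < (N : ℝ) := by norm_num at h5; linarith
    have : (32 : ℕ) < N := by exact_mod_cast h32
    omega
  have hk16 : (16 : ℕ) ≤ k := by omega
  set K : ℝ := (k : ℝ) with hKdef
  have hK16 : (16 : ℝ) ≤ K := by rw [hKdef]; exact_mod_cast hk16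
  have hK0 : (0 : ℝ) < K := by linarith
  have hNK : (N : ℝ) = 2 * K := by
    obtain ⟨t, ht⟩ := hNeven
    have htk : k = t := by omega
    rw [hKdef, htk, ht]; push_cast; ring
  have hclog : K ≤ 2 ^ c := by
    rw [hKdef]
    exact_mod_cast hclog_nat
  -- the base B
  set B : ℝ := 1 + r / K with hBdef
  have hrK : -1/16 ≤ r / K := by
    rw [div_le_div_iff₀ (by norm_num) hK0]
    linarith
  have hB0 : (15:ℝ)/16 ≤ B := by rw [hBdef]; linarith
  have hBpos : (0:ℝ) < B := lt_of_lt_of_le (by norm_num) hB0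
  have hB1 : B < 1 := by
    rw [hBdef]
    linarith [div_neg_of_neg_of_pos hmn₁ hK0]
  have hKr : (0:ℝ) < K + r := by linarith
  have hKB : K * B = K + r := by
    rw [hBdef]
    field_simp
  -- rewrite A
  have hA_eq : 1 / ((N : ℝ) / ((N : ℝ) + 2 * r)) ^ k = B ^ k := by
    have hbase : ((N : ℝ) / ((N : ℝ) + 2 * r))⁻¹ = B := by
      rw [hNK, hBdef]
      have h1 : (2:ℝ) * K + 2 * r ≠ 0 := ne_of_gt (by linarith)
      field_simp
    rw [one_div, ← inv_pow, hbase]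
  -- now hide K's value except we need it once more below for hA_exp
  set A : ℝ := B ^ k with hAdef
  have hApos : 0 < A := pow_pos hBpos k
  -- δ
  set δ : ℝ := r - K * Real.log B with hδdef
  have hA_exp : A = Real.exp (r - δ) := by
    rw [hδdef, hAdef, ← Real.exp_log (pow_pos hBpos k), Real.log_pow]
    congr 1
    rw [hKdef]
    ring
  clear_value K
  clear hKdef
  clear_value B
  clear hBdef
  clear_value A
  clear hAdef
  clear_value δ
  have hA_exp2 : A = Real.exp r * Real.exp (-δ) := by
    rw [hA_exp, ← Real.exp_add]; ring_nf
  have hδ0 : 0 ≤ δ := by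
    have h := Real.log_le_sub_one_of_pos hBpos
    have hle : K * Real.log B ≤ K * (B - 1) := mul_le_mul_of_nonneg_left h hK0.le
    have hKB1 : K * (B - 1) = r := by rw [mul_sub, hKB]; ring
    rw [hδdef]; linarith
  have hδub : δ ≤ 16 / (15 * K) := by
    have hinv : Real.log B⁻¹ ≤ B⁻¹ - 1 := Real.log_le_sub_one_of_pos (inv_pos.2 hBpos)
    rw [Real.log_inv] at hinv
    have hlb : 1 - B⁻¹ ≤ Real.log B := by linarith
    have h1 : K * (1 - B⁻¹) ≤ K * Real.log B :=
      mul_le_mul_of_nonneg_left hlb (le_of_lt hK0)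
    have h2 : δ ≤ r - K * (1 - B⁻¹) := by rw [hδdef]; linarith
    have h3 : r - K * (1 - B⁻¹) = r ^ 2 / (K * B) := by
      have hBne : B ≠ 0 := ne_of_gt hBpos
      have hBinv : B * B⁻¹ = 1 := mul_inv_cancel₀ hBne
      rw [eq_div_iff (ne_of_gt (mul_pos hK0 hBpos))]
      linear_combination (r - K) * hKB + K ^ 2 * hBinv
    rw [h3] at h2
    have hr2 : r ^ 2 ≤ 1 := by nlinarith [sq_abs r, abs_nonneg r]
    have hden : K * (15/16) ≤ K * B := mul_le_mul_of_nonneg_left hB0 hK0.le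
    have h4 : r ^ 2 / (K * B) ≤ 1 / (K * (15/16)) :=
      div_le_div₀ (by norm_num) hr2 (by linarith) hden
    calc δ ≤ r ^ 2 / (K * B) := h2
      _ ≤ 1 / (K * (15/16)) := h4
      _ = 16 / (15 * K) := by ring
  have hδ15 : δ ≤ 1 / 15 := by
    have h1 : 16 / (15 * K) ≤ 16 / (15 * 16) := by
      apply div_le_div_of_nonneg_left (by norm_num) (by norm_num) (by linarith)
    calc δ ≤ 16 / (15 * K) := hδub
      _ ≤ 16 / (15 * 16) := h1
      _ ≤ 1/15 := by norm_num
  -- cube bound : 256 * 2^p < K^3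
  set P : ℝ := (2:ℝ) ^ p with hPdef
  have hPpos : 0 < P := by rw [hPdef]; positivity
  have hK3 : 256 * P < K ^ 3 := by
    have h1 : (2:ℝ) ^ (((p : ℝ) + 11) / 3) < 2 * K := by rw [← hNK]; exact hN
    have hnn : (0:ℝ) ≤ (2:ℝ) ^ (((p : ℝ) + 11) / 3) := Real.rpow_nonneg (by norm_num) _
    have h2 : ((2:ℝ) ^ (((p : ℝ) + 11) / 3)) ^ (3:ℕ) < (2 * K) ^ (3:ℕ) :=
      pow_lt_pow_left₀ h1 hnn (by norm_num)
    have h3 : ((2:ℝ) ^ (((p : ℝ) + 11) / 3)) ^ (3:ℕ) = 2048 * P := by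
      rw [← Real.rpow_natCast ((2:ℝ) ^ (((p : ℝ) + 11) / 3)) 3, ← Real.rpow_mul (by norm_num)]
      have he : ((p : ℝ) + 11) / 3 * ((3:ℕ):ℝ) = ((p + 11 : ℕ) : ℝ) := by push_cast; ring
      rw [he, Real.rpow_natCast, hPdef, pow_add]
      norm_num
      ring
    rw [h3] at h2
    nlinarith [h2]
  -- 1/2^q = 16 * (2^c)^2 / 2^p
  have h24 : ((2:ℝ)) ^ (2 * c + 4) = 16 * ((2:ℝ) ^ c) ^ 2 := by
    rw [two_mul, pow_add, pow_add]
    ring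
  have hq_eq : (1 : ℝ) / 2 ^ q = 16 * ((2:ℝ) ^ c) ^ 2 / P := by
    rw [hPdef, hqp, pow_add, h24]
    have h2q : ((2:ℝ)) ^ q ≠ 0 := by positivity
    field_simp
  clear_value P
  -- main numeric inequality
  have hmain : 2 / P + δ < (1 - δ) * (1 / 2 ^ q) := by
    have hδP : δ * P ≤ K ^ 2 / 240 := by
      calc δ * P ≤ (16 / (15 * K)) * P :=
            mul_le_mul_of_nonneg_right hδub (le_of_lt hPpos)
        _ ≤ (16 / (15 * K)) * (K ^ 3 / 256) := by
            apply mul_le_mul_of_nonneg_left (by linarith)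
            exact div_nonneg (by norm_num) (by linarith)
        _ = K ^ 2 / 240 := by
            field_simp
            ring
    have hK2 : (256:ℝ) ≤ K ^ 2 := by
      calc (256:ℝ) = 16 * 16 := by norm_num
        _ ≤ K * K := mul_le_mul hK16 hK16 (by norm_num) (by linarith)
        _ = K ^ 2 := (sq K).symm
    have hprod : δ * K ^ 2 ≤ (1/15) * K ^ 2 :=
      mul_le_mul_of_nonneg_right hδ15 (sq_nonneg K)
    have key : 2 + δ * P < (1 - δ) * (16 * K ^ 2) := by
      have expand : (1 - δ) * (16 * K ^ 2) = 16 * K ^ 2 - 16 * (δ * K ^ 2) := by ring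
      rw [expand]
      linarith [hδP, hK2, hprod]
    have hstep : 2 / P + δ < (1 - δ) * (16 * K ^ 2 / P) := by
      have e1 : 2 / P + δ = (2 + δ * P) / P := by field_simp
      have e2 : (1 - δ) * (16 * K ^ 2 / P) = ((1 - δ) * (16 * K ^ 2)) / P := by ring
      rw [e1, e2]
      exact (div_lt_div_iff₀ hPpos hPpos).mpr (mul_lt_mul_of_pos_right key hPpos)
    apply lt_of_lt_of_le hstep
    rw [hq_eq]
    apply mul_le_mul_of_nonneg_left _ (by linarith)
    have h16 : 16 * K ^ 2 ≤ 16 * ((2:ℝ) ^ c) ^ 2 := by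
      have : K ^ 2 ≤ ((2:ℝ) ^ c) ^ 2 := by
        apply pow_le_pow_left₀ hK0.le hclog
      linarith
    exact (div_le_div_iff_of_pos_right hPpos).mpr h16
  -- assemble
  rw [hA_eq, abs_of_pos hApos]
  have h2p1 : (1:ℝ) ≤ P := by
    rw [hPdef]; exact one_le_pow₀ (by norm_num)
  have hxr1 : |x - r| ≤ 1 := by
    have hP1 : (1:ℝ)/P ≤ 1 := by rw [div_le_one hPpos]; exact h2p1
    have hP0 : (0:ℝ) ≤ 1/P := by positivity
    have : |r| * (1 / P) ≤ 1 := by nlinarith [abs_nonneg r]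
    linarith [hx]
  have hE1 : |Real.exp x - Real.exp r| < Real.exp r * (2 / P) := by
    have heq : Real.exp x - Real.exp r = Real.exp r * (Real.exp (x - r) - 1) := by
      rw [mul_sub, ← Real.exp_add]; ring_nf
    rw [heq, abs_mul, abs_of_pos (Real.exp_pos r)]
    apply mul_lt_mul_of_pos_left _ (Real.exp_pos r)
    calc |Real.exp (x - r) - 1| ≤ 2 * |x - r| := Real.abs_exp_sub_one_le hxr1
      _ < 2 * (|r| * (1 / P)) := by linarith [hx]
      _ ≤ 2 * (1 * (1 / P)) := by
          apply mul_le_mul_of_nonneg_left _ (by norm_num)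
          apply mul_le_mul_of_nonneg_right (le_of_lt hrabs) (one_div_nonneg.mpr hPpos.le)
      _ = 2 / P := by ring
  have hexpneg : 1 - δ ≤ Real.exp (-δ) := by linarith [Real.add_one_le_exp (-δ)]
  have hexpneg1 : Real.exp (-δ) ≤ 1 := by
    rw [← Real.exp_zero]
    exact Real.exp_le_exp.2 (by linarith)
  have hE2a : A ≤ Real.exp r := by
    rw [hA_exp]
    exact Real.exp_le_exp.2 (by linarith)
  have hE2 : Real.exp r - A ≤ Real.exp r * δ := by
    rw [hA_exp2]
    nlinarith [Real.exp_pos r, hexpneg]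
  have hAlb : Real.exp r * (1 - δ) ≤ A := by
    rw [hA_exp2]
    exact mul_le_mul_of_nonneg_left hexpneg (Real.exp_pos r).le
  have h2qpos : (0:ℝ) < 1 / 2 ^ q := by positivity
  calc |Real.exp x - A| ≤ |Real.exp x - Real.exp r| + |Real.exp r - A| :=
        abs_sub_le _ _ _
    _ < Real.exp r * (2 / P) + |Real.exp r - A| := by linarith [hE1]
    _ ≤ Real.exp r * (2 / P) + Real.exp r * δ := by
        rw [abs_of_nonneg (by linarith [hE2a])]
        linarith [hE2]
    _ = Real.exp r * (2 / P + δ) := by ring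
    _ < Real.exp r * ((1 - δ) * (1 / 2 ^ q)) :=
        mul_lt_mul_of_pos_left hmain (Real.exp_pos r)
    _ = (Real.exp r * (1 - δ)) * (1 / 2 ^ q) := by ring
    _ ≤ A * (1 / 2 ^ q) := mul_le_mul_of_nonneg_right hAlb (le_of_lt h2qpos)
end

section
/- Let x be a real number represented by (m,n,p) with m/n ≥ 1. Let k ≥ 1 be a natural number such that m/(2^k · n) < 1, let N be an even natural number with N > 2^((p+11)/3), and assume p ≥ 2⌈log₂(N/2)⌉ + 2k + 3. Then exp(x) is approximated by A = (N/(N - 2m/(2^k · n)))^(N·2^(k-1)) with relative error less than 1/2^(p - 2⌈log₂(N/2)⌉ - 2k - 3); that is, |exp(x) - A| < |A| * (1/2^(p - 2⌈log₂(N/2)⌉ - 2k - 3)). -/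
lemma exp_repr_aux (Nr C K Q : ℝ) (hN : 10 ≤ Nr) (hC : Nr/2 ≤ C) (hK : 2 ≤ K)
    (hQ : 0 < Q) (h3 : Q * (C^2 * K^2 * 8) * 2048 < Nr^3) :
    2*K/(Q*(C^2*K^2*8)) + 4*K/(Nr-2) ≤ 1/Q := by
  have hCpos : (0:ℝ) < C := by linarith
  have hKpos : (0:ℝ) < K := by linarith
  have hPpos : (0:ℝ) < Q*(C^2*K^2*8) := by positivity
  have half1 : 2*K/(Q*(C^2*K^2*8)) ≤ 1/(2*Q) := by
    rw [div_le_div_iff₀ hPpos (by positivity)]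
    have h1 : (0:ℝ) ≤ 8*C^2*K^2 - 4*K := by
      have hC1 : (1:ℝ) ≤ C^2 := by nlinarith
      have h2 : 4*K ≤ 8*K^2 := by nlinarith
      have h3' : 8*K^2 ≤ 8*C^2*K^2 := by nlinarith [sq_nonneg K]
      linarith
    nlinarith [mul_nonneg hQ.le h1]
  have half2 : 4*K/(Nr-2) ≤ 1/(2*Q) := by
    rw [div_le_div_iff₀ (by linarith) (by positivity)]
    have key : 8*K*Q * (2048*C^2*K) < (Nr-2) * (2048*C^2*K) := by
      have e : 8*K*Q*(2048*C^2*K) = 2048*(Q*(C^2*K^2*8)) := by ring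
      rw [e]
      have step1 : (Nr-2) * (2048*(Nr/2)^2*2) ≤ (Nr-2)*(2048*C^2*K) := by
        gcongr <;> nlinarith
      nlinarith
    have := (mul_lt_mul_iff_of_pos_right (by positivity : (0:ℝ) < 2048*C^2*K)).1 key
    linarith
  calc 2*K/(Q*(C^2*K^2*8)) + 4*K/(Nr-2) ≤ 1/(2*Q) + 1/(2*Q) := add_le_add half1 half2
  _ = 1/Q := by rw [← add_div]; ring_nf

/-- Range-reduced Riemann-sum approximation of `exp x` for `m/n ≥ 1`:
if `x` is represented by `(m, n, p)`, `k ≥ 1` with `m / (2 ^ k * n) < 1`,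
`N` is even with `N > 2 ^ ((p + 11) / 3)` (real power), and
`p ≥ 2 ⌈log₂ (N / 2)⌉ + 2 k + 3`, then
`A = (N / (N - 2 m / (2 ^ k * n))) ^ (N * 2 ^ (k - 1))` approximates `exp x`
with relative error less than `1 / 2 ^ (p - 2 ⌈log₂ (N / 2)⌉ - 2 k - 3)`. -/
theorem exp_represented_large (x : ℝ) (m n : ℤ) (p N k : ℕ)
    (hm : m ≠ 0) (hn : n ≠ 0)
    (hx : |x - (m : ℝ) / (n : ℝ)| < |(m : ℝ) / (n : ℝ)| * (1 / 2 ^ p))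
    (hmn : 1 ≤ (m : ℝ) / (n : ℝ))
    (hk : 1 ≤ k)
    (hksmall : (m : ℝ) / (2 ^ k * (n : ℝ)) < 1)
    (hNeven : Even N)
    (hN : (N : ℝ) > (2 : ℝ) ^ (((p : ℝ) + 11) / 3))
    (hp : 2 * Nat.clog 2 (N / 2) + 2 * k + 3 ≤ p) :
    |Real.exp x -
        ((N : ℝ) / ((N : ℝ) - 2 * ((m : ℝ) / (2 ^ k * (n : ℝ))))) ^ (N * 2 ^ (k - 1))| <
      |((N : ℝ) / ((N : ℝ) - 2 * ((m : ℝ) / (2 ^ k * (n : ℝ))))) ^ (N * 2 ^ (k - 1))| *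
        (1 / 2 ^ (p - 2 * Nat.clog 2 (N / 2) - 2 * k - 3)) := by
  have hmn0 : (0:ℝ) < (m:ℝ)/n := lt_of_lt_of_le one_pos hmn
  set c := Nat.clog 2 (N / 2) with hc
  set q := p - 2 * c - 2 * k - 3 with hqdef
  have hq : q + (2*c + 2*k + 3) = p := by omega
  -- N is large
  have hN8 : (8:ℝ) < N := by
    refine lt_trans ?_ hN
    have h3 : (2:ℝ)^(3:ℝ) < 2 ^ (((p:ℝ)+11)/3) := by
      apply Real.rpow_lt_rpow_left_iff (by norm_num : (1:ℝ) < 2) |>.2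
      have : (0:ℝ) ≤ p := Nat.cast_nonneg p
      linarith
    have h8 : (2:ℝ)^(3:ℝ) = 8 := by
      rw [show (3:ℝ) = ((3:ℕ):ℝ) by norm_num, Real.rpow_natCast]; norm_num
    linarith
  have hN10 : (10:ℝ) ≤ N := by
    have h9 : 8 < N := by exact_mod_cast hN8
    obtain ⟨r, hr⟩ := hNeven
    have : 10 ≤ N := by omega
    exact_mod_cast this
  -- y facts
  set y : ℝ := (m:ℝ) / (2^k * n) with hydef
  have h2k : (0:ℝ) < 2^k := by positivity
  have hyval : (2:ℝ)^k * y = (m:ℝ)/n := by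
    rw [hydef]; field_simp
  have hy0 : 0 < y := by
    have : y = ((m:ℝ)/n) / 2^k := by rw [hydef, div_div, mul_comm]
    rw [this]; exact div_pos hmn0 h2k
  have hy1 : y < 1 := hksmall
  have hden : (0:ℝ) < (N:ℝ) - 2*y := by linarith
  set B : ℝ := (N:ℝ)/((N:ℝ) - 2*y) with hBdef
  have hBpos : 0 < B := div_pos (by linarith) hden
  set M : ℕ := N * 2^(k-1) with hMdef
  set A : ℝ := B ^ M with hAdef
  have hApos : 0 < A := pow_pos hBpos M
  have hMcast : ((M:ℕ):ℝ) = (N:ℝ) * 2^(k-1) := by rw [hMdef]; push_cast; ring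
  have h2k1 : (2:ℝ)^(k-1) * 2 = 2^k := by
    rw [← pow_succ]; congr 1; omega
  set L : ℝ := Real.log B with hLdef
  have hNne : (N:ℝ) ≠ 0 := by linarith
  -- log bounds
  have hL_lb : 2*y/(N:ℝ) ≤ L := by
    have h := Real.log_le_sub_one_of_pos (inv_pos.2 hBpos)
    rw [Real.log_inv] at h
    have hBi : B⁻¹ - 1 = -(2*y/(N:ℝ)) := by
      rw [hBdef, inv_div]; field_simp; ring
    rw [hBi] at h
    linarith
  have hL_ub : L ≤ 2*y/((N:ℝ)-2*y) := by
    have h := Real.log_le_sub_one_of_pos hBpos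
    have hB1 : B - 1 = 2*y/((N:ℝ)-2*y) := by
      rw [hBdef]; field_simp; ring
    rw [hB1] at h
    exact h
  -- bounds on Δ = M*L - 2^k*y
  have hNL_lb : 2*y ≤ (N:ℝ)*L := by
    have := mul_le_mul_of_nonneg_left hL_lb (Nat.cast_nonneg N : (0:ℝ) ≤ N)
    calc 2*y = (N:ℝ)*(2*y/(N:ℝ)) := by field_simp
    _ ≤ (N:ℝ)*L := this
  have hNL_ub : (N:ℝ)*L - 2*y ≤ 4/((N:ℝ)-2) := by
    have h1 : (N:ℝ)*L ≤ (N:ℝ)*(2*y/((N:ℝ)-2*y)) :=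
      mul_le_mul_of_nonneg_left hL_ub (Nat.cast_nonneg N)
    have h2 : (N:ℝ)*(2*y/((N:ℝ)-2*y)) - 2*y = 4*y^2/((N:ℝ)-2*y) := by
      field_simp; ring
    have h3 : 4*y^2/((N:ℝ)-2*y) ≤ 4/((N:ℝ)-2) := by
      apply div_le_div₀ (by norm_num) (by nlinarith) (by linarith) (by linarith)
    linarith
  set Δ : ℝ := (M:ℝ)*L - 2^k*y with hΔdef
  have hΔ0 : 0 ≤ Δ := by
    rw [hΔdef, hMcast]
    have : (N:ℝ) * 2^(k-1) * L = 2^(k-1) * ((N:ℝ)*L) := by ring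
    nlinarith [pow_pos (by norm_num : (0:ℝ) < 2) (k-1), hNL_lb]
  have hΔub : Δ ≤ 2^(k+1)/((N:ℝ)-2) := by
    rw [hΔdef, hMcast]
    have e1 : (N:ℝ) * 2^(k-1) * L - 2^k*y = 2^(k-1) * ((N:ℝ)*L - 2*y) := by
      rw [← h2k1]; ring
    rw [e1]
    have e2 : (2:ℝ)^(k+1) = 2^(k-1) * 4 := by
      rw [show k+1 = (k-1)+2 by omega, pow_add]; norm_num
    rw [e2, mul_div_assoc]
    exact mul_le_mul_of_nonneg_left hNL_ub (by positivity)
  -- bound on |x - 2^k y|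
  have hx' : |x - 2^k*y| < 2^k/2^p := by
    have h1 : |(m:ℝ)/n| * (1/2^p) ≤ 2^k/2^p := by
      rw [abs_of_pos hmn0, ← hyval]
      have h2 : (2:ℝ)^k*y ≤ 2^k := mul_le_of_le_one_right h2k.le hy1.le
      have h3 : (0:ℝ) ≤ 1/2^p := by positivity
      calc (2:ℝ)^k*y * (1/2^p) ≤ 2^k * (1/2^p) := mul_le_mul_of_nonneg_right h2 h3
      _ = 2^k/2^p := by ring
    rw [hyval]; exact lt_of_lt_of_le hx h1
  -- arithmetic: 2^(k+1)/2^p + 2^(k+2)/(N-2) ≤ 1/2^q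
  have hPeq : (2:ℝ)^p = 2^q * 2^(2*c+2*k+3) := by
    rw [← hq, pow_add]
  have h2c : (N:ℝ)/2 ≤ 2^c := by
    have h1 : N / 2 ≤ 2 ^ c := Nat.le_pow_clog (by norm_num) (N/2)
    have h2 : ((N / 2 : ℕ) : ℝ) = (N:ℝ)/2 := by
      obtain ⟨r, hr⟩ := hNeven
      subst hr
      rw [show (r+r)/2 = r from by omega]
      push_cast; ring
    calc (N:ℝ)/2 = ((N/2 : ℕ):ℝ) := h2.symm
    _ ≤ ((2^c : ℕ):ℝ) := by exact_mod_cast h1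
    _ = 2^c := by push_cast; ring
  have h2p3 : (2:ℝ)^p * 2048 < (N:ℝ)^3 := by
    have h1 : ((2:ℝ)^(((p:ℝ)+11)/3)) ^ (3:ℕ) < (N:ℝ)^(3:ℕ) :=
      pow_lt_pow_left₀ hN (le_of_lt (Real.rpow_pos_of_pos two_pos _)) (by norm_num)
    have h2 : ((2:ℝ)^(((p:ℝ)+11)/3)) ^ (3:ℕ) = 2^(p+11) := by
      rw [← Real.rpow_natCast ((2:ℝ)^(((p:ℝ)+11)/3)) 3, ← Real.rpow_mul (by norm_num)]
      rw [show (((p:ℝ)+11)/3) * (3:ℕ) = ((p+11:ℕ):ℝ) by push_cast; ring]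
      rw [Real.rpow_natCast]
    rw [h2] at h1
    calc (2:ℝ)^p * 2048 = 2^(p+11) := by rw [pow_add]; norm_num
    _ < (N:ℝ)^3 := h1
  have hCpos : (0:ℝ) < 2^c := by positivity
  have hsplit : (2:ℝ)^(2*c+2*k+3) = (2^c)^2 * (2^k)^2 * 8 := by
    rw [show 2*c+2*k+3 = c*2+(k*2+3) from by ring, pow_add, pow_add, pow_mul, pow_mul]
    norm_num
    ring
  have hK2 : (2:ℝ) ≤ 2^k := by
    calc (2:ℝ) = 2^1 := (pow_one 2).symm
    _ ≤ 2^k := pow_le_pow_right₀ one_le_two hk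
  have hQpos : (0:ℝ) < 2^q := by positivity
  have harith : 2*(2^k:ℝ)/(2^q*((2^c)^2*(2^k)^2*8)) + 4*2^k/((N:ℝ)-2) ≤ 1/2^q := by
    apply exp_repr_aux (N:ℝ) (2^c) (2^k) (2^q) hN10 h2c hK2 hQpos
    rw [← hsplit, ← hPeq]
    exact h2p3
  have heps : 2*((2^k:ℝ)/2^p + 2^(k+1)/((N:ℝ)-2)) ≤ 1/2^q := by
    have e : 2*((2^k:ℝ)/2^p + 2^(k+1)/((N:ℝ)-2)) = 2*2^k/2^p + 4*2^k/((N:ℝ)-2) := by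
      rw [pow_add]; ring
    rw [e, hPeq, hsplit]
    exact harith
  -- assemble |t₀| bound
  set t₀ : ℝ := x - (M:ℝ)*L with ht₀def
  have ht₀ : |t₀| < 2^k/2^p + 2^(k+1)/((N:ℝ)-2) := by
    have e1 : t₀ = (x - 2^k*y) - Δ := by rw [ht₀def, hΔdef]; ring
    have e2 : |t₀| ≤ |x - 2^k*y| + |Δ| := by
      rw [e1, sub_eq_add_neg]
      calc |x - 2^k*y + -Δ| ≤ |x - 2^k*y| + |-Δ| := abs_add_le _ _
      _ = |x - 2^k*y| + |Δ| := by rw [abs_neg]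
    have e3 : |Δ| ≤ 2^(k+1)/((N:ℝ)-2) := by rw [abs_of_nonneg hΔ0]; exact hΔub
    calc |t₀| ≤ |x - 2^k*y| + |Δ| := e2
    _ < 2^k/2^p + 2^(k+1)/((N:ℝ)-2) := add_lt_add_of_lt_of_le hx' e3
  have h2q1 : (1:ℝ) ≤ 2^q := by
    have h : (1:ℕ) ≤ 2^q := Nat.one_le_two_pow
    exact_mod_cast h
  have hq1 : (1:ℝ)/2^q ≤ 1 := by
    rw [div_le_one hQpos]; exact h2q1
  have ht1 : |t₀| ≤ 1 := by linarith
  have hexpbound : |Real.exp t₀ - 1| < 1/2^q := by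
    have h := Real.abs_exp_sub_one_le ht1
    linarith
  have hlogA : Real.log A = (M:ℝ) * L := by
    rw [hAdef, Real.log_pow, ← hLdef]
  have hexpx : Real.exp x = A * Real.exp t₀ := by
    rw [← Real.exp_log hApos, ← Real.exp_add, hlogA]
    congr 1
    rw [ht₀def]; ring
  rw [hexpx, abs_of_pos hApos]
  have e4 : A * Real.exp t₀ - A = A * (Real.exp t₀ - 1) := by ring
  rw [e4, abs_mul, abs_of_pos hApos]
  exact mul_lt_mul_of_pos_left hexpbound hApos
end

section
/- Let x be a real number represented by (m,n,p) with p ≥ 1 and m/n > 1. Let N = ⌈2^(p-2) · (m/n)² / (m/n - 1)⌉, let j be a natural number with 2^j ≥ (1 + n/m)/(1 - n/m), and assume p ≥ j + 4. Define the Riemann sum S = ((m/n - 1)/N) · Σ_{i=0}^{N-1} 1/(1 + (i/N)·(m/n - 1)). Then ln(x) is approximated by S with relative error less than 1/2^(p-j-4); that is, |ln(x) - S| < |S| * (1/2^(p-j-4)). -/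
set_option maxHeartbeats 1600000 in
/-- Riemann-sum approximation of `ln x` for `m/n > 1`: if `x` is represented by
`(m, n, p)` with `p ≥ 1`, `N = ⌈2 ^ (p - 2) * (m/n) ^ 2 / (m/n - 1)⌉`, `j` satisfies
`2 ^ j ≥ (1 + n/m) / (1 - n/m)`, and `p ≥ j + 4`, then the Riemann sum
`S = ((m/n - 1) / N) * ∑_{i=0}^{N-1} 1 / (1 + (i / N) * (m/n - 1))` approximates
`ln x` with relative error less than `1 / 2 ^ (p - j - 4)`. -/
theorem log_represented_gt_one (x : ℝ) (m n : ℤ) (p j N : ℕ)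
    (hm : m ≠ 0) (hn : n ≠ 0) (hp : 1 ≤ p)
    (hx : |x - (m : ℝ) / (n : ℝ)| < |(m : ℝ) / (n : ℝ)| * (1 / 2 ^ p))
    (hmn : 1 < (m : ℝ) / (n : ℝ))
    (hN : N = ⌈(2 : ℝ) ^ (p - 2) * ((m : ℝ) / (n : ℝ)) ^ 2 / ((m : ℝ) / (n : ℝ) - 1)⌉₊)
    (hj : (2 : ℝ) ^ j ≥ (1 + (n : ℝ) / (m : ℝ)) / (1 - (n : ℝ) / (m : ℝ)))
    (hpj : j + 4 ≤ p) :
    |Real.log x -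
        ((m : ℝ) / (n : ℝ) - 1) / N *
          ∑ i ∈ Finset.range N, 1 / (1 + (i : ℝ) / N * ((m : ℝ) / (n : ℝ) - 1))| <
      |((m : ℝ) / (n : ℝ) - 1) / N *
          ∑ i ∈ Finset.range N, 1 / (1 + (i : ℝ) / N * ((m : ℝ) / (n : ℝ) - 1))| *
        (1 / 2 ^ (p - j - 4)) := by
  set y := (m : ℝ) / (n : ℝ) with hy
  have hy1 : (1:ℝ) < y := hmn
  have hy0 : (0:ℝ) < y := lt_trans one_pos hy1
  have hys : (0:ℝ) < y - 1 := sub_pos.2 hy1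
  have hny : (n:ℝ)/(m:ℝ) = 1/y := by rw [hy, one_div_div]
  have hNpos : 0 < N := by
    rw [hN]; exact Nat.ceil_pos.2 (by positivity)
  have hNR : (0:ℝ) < (N:ℝ) := by exact_mod_cast hNpos
  have hNle : (2:ℝ)^(p-2) * y^2 / (y-1) ≤ N := by rw [hN]; exact Nat.le_ceil _
  set h := (y - 1) / N with hh
  have hhpos : 0 < h := div_pos hys hNR
  set a : ℕ → ℝ := fun i => 1 + i * h with ha
  have hapos : ∀ i, 0 < a i := by
    intro i
    have hi : (0:ℝ) ≤ (i:ℝ) := Nat.cast_nonneg i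
    have : (0:ℝ) ≤ (i:ℝ) * h := mul_nonneg hi hhpos.le
    simp only [ha]
    linarith
  have ha0 : a 0 = 1 := by simp [ha]
  have haN : a N = y := by
    simp only [ha, hh]; field_simp; ring
  have hstep : ∀ i : ℕ, a (i+1) - a i = h := by
    intro i; simp only [ha]; push_cast; ring
  have hup : ∀ i : ℕ, Real.log (a (i+1)) - Real.log (a i) ≤ h / a i := by
    intro i
    have h1 := Real.log_le_sub_one_of_pos (div_pos (hapos (i+1)) (hapos i))
    rw [Real.log_div (hapos (i+1)).ne' (hapos i).ne'] at h1
    have h2 : a (i+1) / a i - 1 = h / a i := by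
      rw [div_sub_one (hapos i).ne', hstep i]
    linarith [h2 ▸ h1]
  have hlo : ∀ i : ℕ, h / a (i+1) ≤ Real.log (a (i+1)) - Real.log (a i) := by
    intro i
    have h1 := Real.log_le_sub_one_of_pos (div_pos (hapos i) (hapos (i+1)))
    rw [Real.log_div (hapos i).ne' (hapos (i+1)).ne'] at h1
    have h2 : a i / a (i+1) - 1 = -(h / a (i+1)) := by
      rw [div_sub_one (hapos (i+1)).ne', ← neg_div]
      congr 1
      linarith [hstep i]
    rw [h2] at h1
    linarith
  have htel : ∑ i ∈ Finset.range N, (Real.log (a (i+1)) - Real.log (a i)) = Real.log y := by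
    rw [Finset.sum_range_sub (fun i => Real.log (a i)), haN, ha0, Real.log_one, sub_zero]
  set S := ∑ i ∈ Finset.range N, h / a i with hS
  have hSgoal : (y - 1)/(N:ℝ) * ∑ i ∈ Finset.range N, 1 / (1 + (i:ℝ)/N * (y-1)) = S := by
    rw [Finset.mul_sum]
    apply Finset.sum_congr rfl
    intro i _
    have e : 1 + (i:ℝ)/N * (y-1) = a i := by
      simp only [ha, hh]; ring
    rw [e, hh, mul_one_div]
  have hSlog : Real.log y ≤ S := by
    rw [← htel]; exact Finset.sum_le_sum (fun i _ => hup i)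
  have hlogpos : 0 < Real.log y := Real.log_pos hy1
  have hSup : S - Real.log y ≤ h * (y-1)/y := by
    have h1 : ∑ i ∈ Finset.range N, h / a (i+1) ≤ Real.log y := by
      rw [← htel]; exact Finset.sum_le_sum (fun i _ => hlo i)
    have h2 : S - ∑ i ∈ Finset.range N, h / a (i+1) = h / a 0 - h / a N := by
      rw [← Finset.sum_sub_distrib]
      exact Finset.sum_range_sub' (fun i => h / a i) N
    have h3 : h / a 0 - h / a N = h * (y-1)/y := by
      rw [ha0, haN]; field_simp
    linarith
  have hlogge : (y-1)/y ≤ Real.log y := by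
    have e := Real.log_le_sub_one_of_pos (show (0:ℝ) < 1/y by positivity)
    rw [Real.log_div one_ne_zero hy0.ne', Real.log_one, zero_sub] at e
    have e2 : (y-1)/y = 1 - 1/y := by field_simp
    rw [e2]; linarith
  -- h bound
  have hc : (0:ℝ) < (2:ℝ)^(p-2) * y^2 / (y-1) := by positivity
  have hp2 : (2:ℝ)^(p-2) * 4 = 2^p := by
    have : p - 2 + 2 = p := by omega
    rw [← this, pow_add]; norm_num
  have h2ppos : (0:ℝ) < 2^p := by positivity
  have hhle : h ≤ (y-1)^2 / ((2:ℝ)^(p-2) * y^2) := by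
    rw [hh]
    calc (y-1)/(N:ℝ) ≤ (y-1) / ((2:ℝ)^(p-2) * y^2 / (y-1)) := by
          gcongr
      _ = (y-1)^2 / ((2:ℝ)^(p-2)*y^2) := by
          rw [div_div_eq_mul_div]; ring
  have hSup2 : S - Real.log y ≤ 4*(y-1)^3 / (2^p * y^3) := by
    have e1 : h * (y-1)/y ≤ (y-1)^2 / ((2:ℝ)^(p-2) * y^2) * (y-1)/y := by
      gcongr
    have e2 : (y-1)^2 / ((2:ℝ)^(p-2) * y^2) * (y-1)/y = 4*(y-1)^3 / (2^p * y^3) := by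
      rw [← hp2]; field_simp
    linarith [hSup]
  -- x vs y
  have habs : |y| = y := abs_of_pos hy0
  rw [habs] at hx
  have hxabs := abs_lt.1 hx
  have h16 : (16:ℝ) ≤ 2^p := by
    calc (16:ℝ) = 2^4 := by norm_num
      _ ≤ 2^p := by
          apply pow_le_pow_right₀ (by norm_num)
          omega
  have hxgt : 15*y/16 < x := by
    have h1 : (1:ℝ)/2^p ≤ 1/16 := by
      rw [div_le_div_iff₀ h2ppos (by norm_num)]; linarith
    have h2 : y * (1/2^p) ≤ y * (1/16) := by gcongr
    linarith [hxabs.1, h2]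
  have hxpos : 0 < x := by
    have : (0:ℝ) < 15*y/16 := by positivity
    linarith
  have hlogx_up : Real.log x - Real.log y < 1/2^p := by
    have e1 := Real.log_le_sub_one_of_pos (div_pos hxpos hy0)
    rw [Real.log_div hxpos.ne' hy0.ne'] at e1
    have e2 : x/y - 1 = (x - y)/y := by field_simp
    have e3 : (x - y)/y < 1/2^p := by
      rw [div_lt_iff₀ hy0]
      calc x - y < y * (1/2^p) := hxabs.2
        _ = 1/2^p * y := by ring
    linarith [e2 ▸ e1]
  have hlogx_lo : Real.log y - Real.log x < 2/2^p := by
    have e1 := Real.log_le_sub_one_of_pos (div_pos hy0 hxpos)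
    rw [Real.log_div hy0.ne' hxpos.ne'] at e1
    have e2 : y/x - 1 = (y - x)/x := by field_simp
    have e3 : (y - x)/x < 2/2^p := by
      rw [div_lt_iff₀ hxpos]
      have hyx : y - x < y/2^p := by
        have := hxabs.1
        rw [mul_one_div] at this
        linarith
      have hy2x : y < 2*x := by linarith
      have hB : y/2^p < (2*x)/2^p := (div_lt_div_iff_of_pos_right h2ppos).2 hy2x
      have hC : (2*x)/2^p = 2/2^p * x := by ring
      linarith [hC ▸ hB]
    linarith [e2 ▸ e1]
  -- final
  rw [hSgoal]
  have hSpos : 0 < S := lt_of_lt_of_le hlogpos hSlog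
  rw [abs_of_pos hSpos]
  have hpow : (2:ℝ)^(p-j-4) * 2^(j+4) = 2^p := by
    rw [← pow_add]
    congr 1
    omega
  have hq : (1:ℝ)/2^(p-j-4) = 2^(j+4)/2^p := by
    rw [eq_div_iff h2ppos.ne', ← hpow]
    field_simp
  rw [hq]
  set T := (y-1)/y with hT
  have hT0 : 0 < T := div_pos hys hy0
  have hT1 : T < 1 := by
    rw [hT, div_lt_one hy0]; linarith
  have hjT : 1 < 2^j * T := by
    have e1 : (1:ℝ) - 1/y = T := by rw [hT]; field_simp
    have e2 : (2:ℝ)^j ≥ (1 + 1/y)/T := by rw [← e1, ← hny]; exact hj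
    have e3 : (1 + 1/y)/T * T = 1 + 1/y := by field_simp
    have e4 : (2:ℝ)^j * T ≥ (1 + 1/y)/T * T := by gcongr
    have : (0:ℝ) < 1/y := by positivity
    linarith [e3 ▸ e4]
  have hST : T ≤ S := le_trans hlogge hSlog
  have htri : |Real.log x - S| ≤ |Real.log x - Real.log y| + |Real.log y - S| :=
    abs_sub_le _ _ _
  have habs1 : |Real.log x - Real.log y| < 2/2^p := by
    have h12 : (1:ℝ)/2^p < 2/2^p := (div_lt_div_iff_of_pos_right h2ppos).2 (by norm_num)
    rw [abs_lt]; constructor <;> linarith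
  have habs2 : |Real.log y - S| ≤ 4*T^3/2^p := by
    rw [abs_of_nonpos (by linarith)]
    have : 4*(y-1)^3 / (2^p * y^3) = 4*T^3/2^p := by
      rw [hT]; field_simp
    linarith [this ▸ hSup2]
  have hfin : 2/2^p + 4*T^3/2^p < S * (2^(j+4)/2^p) := by
    have e1 : S * ((2:ℝ)^(j+4)/2^p) = (S * 2^(j+4))/2^p := by ring
    rw [e1, ← add_div]
    apply (div_lt_div_iff_of_pos_right h2ppos).2
    have h2j : (2:ℝ)^(j+4) = 16 * 2^j := by rw [pow_add]; ring
    have hjpos : (0:ℝ) < 2^j := by positivity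
    have hkey : (16:ℝ) * (2^j * T) ≤ S * 2^(j+4) := by
      rw [h2j]
      have hmul : (2:ℝ)^j * T ≤ 2^j * S := mul_le_mul_of_nonneg_left hST hjpos.le
      linarith
    have hcube : T^3 < 1 := pow_lt_one₀ hT0.le hT1 (by norm_num)
    linarith [hjT, hkey, hcube]
  linarith [htri, habs1, habs2, hfin]
end

section
/- Let x be a real number represented by (m,n,p) with p ≥ 1 and 0 < m/n < 1. Let N = ⌈2^(p-2) · (n/m)² / (n/m - 1)⌉, let j be a natural number with 2^j ≥ (1 + m/n)/(1 - m/n), and assume p ≥ j + 5. Define S = ((n/m - 1)/N) · Σ_{i=0}^{N-1} 1/(1 + (i/N)·(n/m - 1)). Then ln(x) is approximated by -S with relative error less than 1/2^(p-j-5); that is, |ln(x) - (-S)| < |S| * (1/2^(p-j-5)). -/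
set_option maxHeartbeats 2000000 in
/-- Riemann-sum approximation of `ln x` for `0 < m/n < 1`: if `x` is represented by
`(m, n, p)` with `p ≥ 1`, `N = ⌈2 ^ (p - 2) * (n/m) ^ 2 / (n/m - 1)⌉`, `j` satisfies
`2 ^ j ≥ (1 + m/n) / (1 - m/n)`, and `p ≥ j + 5`, then with
`S = ((n/m - 1) / N) * ∑_{i=0}^{N-1} 1 / (1 + (i / N) * (n/m - 1))` the value `-S`
approximates `ln x` with relative error less than `1 / 2 ^ (p - j - 5)`. -/
theorem log_represented_lt_one (x : ℝ) (m n : ℤ) (p j N : ℕ)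
    (hm : m ≠ 0) (hn : n ≠ 0) (hp : 1 ≤ p)
    (hx : |x - (m : ℝ) / (n : ℝ)| < |(m : ℝ) / (n : ℝ)| * (1 / 2 ^ p))
    (hmn₀ : 0 < (m : ℝ) / (n : ℝ)) (hmn₁ : (m : ℝ) / (n : ℝ) < 1)
    (hN : N = ⌈(2 : ℝ) ^ (p - 2) * ((n : ℝ) / (m : ℝ)) ^ 2 / ((n : ℝ) / (m : ℝ) - 1)⌉₊)
    (hj : (2 : ℝ) ^ j ≥ (1 + (m : ℝ) / (n : ℝ)) / (1 - (m : ℝ) / (n : ℝ)))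
    (hpj : j + 5 ≤ p) :
    |Real.log x -
        -(((n : ℝ) / (m : ℝ) - 1) / N *
          ∑ i ∈ Finset.range N, 1 / (1 + (i : ℝ) / N * ((n : ℝ) / (m : ℝ) - 1)))| <
      |((n : ℝ) / (m : ℝ) - 1) / N *
          ∑ i ∈ Finset.range N, 1 / (1 + (i : ℝ) / N * ((n : ℝ) / (m : ℝ) - 1))| *
        (1 / 2 ^ (p - j - 5)) := by
  set a : ℝ := (m : ℝ) / (n : ℝ) with ha_def
  set r : ℝ := (n : ℝ) / (m : ℝ) with hr_def
  have ha0 : 0 < a := hmn₀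
  have ha1 : a < 1 := hmn₁
  have hra : r = a⁻¹ := by rw [hr_def, ha_def, inv_div]
  have hr1 : 1 < r := by rw [hra]; exact one_lt_inv_iff₀.mpr ⟨ha0, ha1⟩
  have hr0 : 0 < r := lt_trans one_pos hr1
  have hNpos0 : (0:ℝ) < 2 ^ (p - 2) * r ^ 2 / (r - 1) :=
    div_pos (by positivity) (by linarith)
  have hN0 : 0 < N := by rw [hN]; exact Nat.ceil_pos.mpr hNpos0
  have hNR : (0:ℝ) < (N:ℝ) := Nat.cast_pos.mpr hN0
  have hNle : 2 ^ (p - 2) * r ^ 2 / (r - 1) ≤ (N:ℝ) := by rw [hN]; exact Nat.le_ceil _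
  set h := (r - 1) / (N : ℝ) with hh_def
  have hh0 : 0 < h := div_pos (by linarith) hNR
  have hterm : ∀ i : ℕ, (1:ℝ) + (i : ℝ) / (N:ℝ) * (r - 1) = 1 + (i:ℝ) * h := by
    intro i; rw [hh_def]; ring
  simp only [hterm]
  set S := h * ∑ i ∈ Finset.range N, 1 / (1 + (i:ℝ) * h) with hS_def
  have hpos : ∀ i : ℕ, (0:ℝ) < 1 + (i:ℝ) * h := fun i =>
    add_pos_of_pos_of_nonneg one_pos (mul_nonneg (Nat.cast_nonneg i) hh0.le)
  have hNne : (N:ℝ) ≠ 0 := hNR.ne'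
  have hNh : 1 + (N:ℝ) * h = r := by rw [hh_def]; field_simp; ring
  set L : ℕ → ℝ := fun i => Real.log (1 + (i:ℝ) * h) with hL_def
  set g : ℕ → ℝ := fun i => h / (1 + (i:ℝ) * h) with hg_def
  clear_value a r h S L g
  have htel : ∑ i ∈ Finset.range N, (L (i+1) - L i) = Real.log r := by
    rw [Finset.sum_range_sub L]
    simp only [hL_def]
    rw [hNh]
    norm_num
  have hub : ∀ i : ℕ, L (i+1) - L i ≤ g i := by
    intro i
    have h1 : (0:ℝ) < 1 + (i:ℝ) * h := hpos i
    have h2 : (0:ℝ) < 1 + ((i:ℝ) + 1) * h := by nlinarith [hpos i, hh0]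
    have key := Real.log_le_sub_one_of_pos (div_pos h2 h1)
    rw [Real.log_div h2.ne' h1.ne'] at key
    have e : (1 + ((i:ℝ)+1)*h) / (1 + (i:ℝ)*h) - 1 = h / (1 + (i:ℝ)*h) := by
      rw [div_sub_one h1.ne']; ring_nf
    rw [e] at key
    simp only [hL_def, hg_def]
    push_cast
    linarith [key]
  have hlb : ∀ i : ℕ, g (i+1) ≤ L (i+1) - L i := by
    intro i
    have h1 : (0:ℝ) < 1 + (i:ℝ) * h := hpos i
    have h2 : (0:ℝ) < 1 + ((i:ℝ) + 1) * h := by nlinarith [hpos i, hh0]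
    have key := Real.log_le_sub_one_of_pos (div_pos h1 h2)
    rw [Real.log_div h1.ne' h2.ne'] at key
    have e : (1 + (i:ℝ)*h) / (1 + ((i:ℝ)+1)*h) - 1 = -(h / (1 + ((i:ℝ)+1)*h)) := by
      rw [div_sub_one h2.ne']; ring_nf
    rw [e] at key
    simp only [hL_def, hg_def]
    push_cast
    linarith [key]
  have hSsum : S = ∑ i ∈ Finset.range N, g i := by
    rw [hS_def, Finset.mul_sum]
    exact Finset.sum_congr rfl (fun i _ => by rw [mul_one_div, hg_def])
  have hA : Real.log r ≤ S := by
    rw [hSsum, ← htel]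
    exact Finset.sum_le_sum (fun i _ => hub i)
  have hB : S - Real.log r ≤ h - h / r := by
    have htel2 : ∑ i ∈ Finset.range N, (g i - g (i+1)) = h - h / r := by
      rw [Finset.sum_range_sub' g]
      simp only [hg_def]
      rw [hNh]
      norm_num
    calc S - Real.log r = ∑ i ∈ Finset.range N, (g i - (L (i+1) - L i)) := by
          rw [hSsum, ← htel, ← Finset.sum_sub_distrib]
      _ ≤ ∑ i ∈ Finset.range N, (g i - g (i+1)) :=
          Finset.sum_le_sum (fun i _ => by linarith [hlb i])
      _ = h - h / r := htel2
  -- arithmetic facts about r and a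
  have har : a * r = 1 := by rw [hra, mul_inv_cancel₀ ha0.ne']
  have hri : r⁻¹ = a := by rw [hra, inv_inv]
  have hrr : (r - 1) / r = 1 - a := by
    rw [div_eq_iff hr0.ne']; linear_combination har
  have h1r : h ≤ (r-1) / (2^(p-2)*r^2/(r-1)) := by
    rw [hh_def]
    exact div_le_div_of_nonneg_left (by linarith) hNpos0 hNle
  have e1 : r - 1 ≠ 0 := by linarith
  have e2 : ((2:ℝ))^(p-2) ≠ 0 := by positivity
  have h2r' : ∀ c : ℝ, c ≠ 0 → (r-1) / (c*r^2/(r-1)) = ((r-1)/r)^2 / c := by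
    intro c hc
    field_simp
  have h2r : (r-1) / (2^(p-2)*r^2/(r-1)) = ((r-1)/r)^2 / 2^(p-2) := h2r' _ e2
  have hp2 : (2:ℝ)^p = 2^(p-2) * 4 := by
    have hpe : p - 2 + 2 = p := by omega
    calc (2:ℝ)^p = 2^(p-2+2) := by rw [hpe]
      _ = 2^(p-2) * 2^2 := pow_add 2 _ 2
      _ = 2^(p-2) * 4 := by norm_num
  have hC : h ≤ (1-a)^2 * (4 / 2^p) := by
    have e3' : ∀ c : ℝ, c ≠ 0 → (1-a)^2 / c = (1-a)^2 * (4 / (c*4)) := by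
      intro c hc
      field_simp
    have e3 : ((r-1)/r)^2 / 2^(p-2) = (1-a)^2 * (4 / 2^p) := by
      rw [hrr, hp2]
      exact e3' _ e2
    calc h ≤ (r-1) / (2^(p-2)*r^2/(r-1)) := h1r
      _ = ((r-1)/r)^2 / 2^(p-2) := h2r
      _ = (1-a)^2 * (4 / 2^p) := e3
  have hSr : S - Real.log r ≤ 4/2^p * (1-a)^3 := by
    have h3 : h - h/r = h * (1-a) := by rw [div_eq_mul_inv, hri]; ring
    have h4 : h * (1-a) ≤ ((1-a)^2 * (4/2^p)) * (1-a) :=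
      mul_le_mul_of_nonneg_right hC (by linarith)
    calc S - Real.log r ≤ h - h/r := hB
      _ = h * (1-a) := h3
      _ ≤ ((1-a)^2 * (4/2^p)) * (1-a) := h4
      _ = 4/2^p * (1-a)^3 := by ring
  have hlogr : Real.log r = -Real.log a := by rw [hra, Real.log_inv]
  have hSlb : 1 - a ≤ Real.log r := by
    have := Real.log_le_sub_one_of_pos ha0
    rw [hlogr]; linarith
  have hSpos : 0 < S := by linarith [hA]
  clear hN hNpos0 hNle hNh hterm htel hub hlb hSsum hB h1r e1 e2 h2r' h2r hp2 hC har hri hrr hh_def hh0 hg_def hL_def hS_def hra hr_def ha_def hN0 hNR hNne hm hn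
  clear hpos
  clear L g h
  -- bound |log x - log a|
  rw [abs_of_pos ha0] at hx
  have ht : (0:ℝ) < 1/2^p := by positivity
  have htle : (1:ℝ)/2^p ≤ 1/2 := by
    have h2le : (2:ℝ) ≤ 2^p := by
      calc (2:ℝ) = 2^1 := (pow_one 2).symm
        _ ≤ 2^p := pow_le_pow_right₀ one_le_two hp
    exact one_div_le_one_div_of_le two_pos h2le
  obtain ⟨hx1, hx2⟩ := abs_lt.mp hx
  have hxlow : a/2 < x := by nlinarith [mul_le_mul_of_nonneg_left htle ha0.le]
  have hx0 : 0 < x := by linarith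
  have hD : |Real.log x - Real.log a| < 2 * (1/2^p) := by
    rw [abs_lt]
    constructor
    · have key := Real.log_le_sub_one_of_pos (div_pos ha0 hx0)
      rw [Real.log_div ha0.ne' hx0.ne'] at key
      have h5 : a/x - 1 < 2*(1/2^p) := by
        rw [div_sub_one hx0.ne', div_lt_iff₀ hx0]
        nlinarith [mul_pos ht (sub_pos.mpr hxlow)]
      linarith
    · have key := Real.log_le_sub_one_of_pos (div_pos hx0 ha0)
      rw [Real.log_div hx0.ne' ha0.ne'] at key
      have h5 : x/a - 1 < 2*(1/2^p) := by
        rw [div_sub_one ha0.ne', div_lt_iff₀ ha0]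
        nlinarith [mul_pos ht ha0]
      linarith
  -- final assembly
  have hsplit : (1:ℝ)/2^(p-j-5) = 2^(j+5) * (1/2^p) := by
    have hpe : (p - j - 5) + (j+5) = p := by omega
    have hpp : (2:ℝ)^p = 2^(p-j-5) * 2^(j+5) := by rw [← pow_add, hpe]
    rw [hpp]
    have q1 : ((2:ℝ))^(p-j-5) ≠ 0 := by positivity
    have q2 : ((2:ℝ))^(j+5) ≠ 0 := by positivity
    field_simp
  have hja : (1:ℝ) ≤ (1-a) * 2^j := by
    have h1a : (0:ℝ) < 1 - a := by linarith
    have hq := (div_le_iff₀ h1a).mp hj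
    nlinarith [hq]
  have h32 : (32:ℝ) ≤ S * 2^(j+5) := by
    have e : (2:ℝ)^(j+5) = 2^j * 32 := by rw [pow_add]; norm_num
    rw [e]
    have hSl : 1 - a ≤ S := le_trans hSlb hA
    nlinarith [mul_le_mul_of_nonneg_right hSl (le_of_lt (pow_pos two_pos j)), hja]
  have hgoal_lhs : |Real.log x - -S| < 6 * (1/2^p) := by
    have heq : Real.log x - -S = (Real.log x - Real.log a) + (S - Real.log r) := by
      rw [hlogr]; ring
    rw [heq]
    have hSrnn : 0 ≤ S - Real.log r := by linarith [hA]
    have habs : |(Real.log x - Real.log a) + (S - Real.log r)| ≤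
        |Real.log x - Real.log a| + (S - Real.log r) := by
      calc |(Real.log x - Real.log a) + (S - Real.log r)|
          ≤ |Real.log x - Real.log a| + |S - Real.log r| := abs_add_le _ _
        _ = |Real.log x - Real.log a| + (S - Real.log r) := by rw [abs_of_nonneg hSrnn]
    have hcube : (1-a)^3 ≤ 1 := pow_le_one₀ (by linarith) (by linarith)
    have hSr' : S - Real.log r ≤ 4*(1/2^p) := by
      have : 4/2^p * (1-a)^3 ≤ 4/2^p := mul_le_of_le_one_right (by positivity) hcube
      calc S - Real.log r ≤ 4/2^p * (1-a)^3 := hSr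
        _ ≤ 4/2^p := this
        _ = 4*(1/2^p) := by ring
    linarith [habs, hD]
  rw [abs_of_pos hSpos, hsplit]
  calc |Real.log x - -S| < 6*(1/2^p) := hgoal_lhs
    _ ≤ 32*(1/2^p) := by linarith [ht]
    _ ≤ (S*2^(j+5))*(1/2^p) := mul_le_mul_of_nonneg_right h32 ht.le
    _ = S * (2^(j+5)*(1/2^p)) := by ring
end

section
/- Let x be a real number represented by (m,n,p) with p ≥ 6. Let N = 2^(p-2) · ⌈(m/n)²⌉ and define the Riemann sum S = ((m/n)/N) · Σ_{i=0}^{N-1} 1/(1 + ((i/N)·(m/n))²). Then arctan(x) is approximated by S with relative error less than 1/2^(p-6); that is, |arctan(x) - S| < |S| * (1/2^(p-6)). -/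
open Real Finset intervalIntegral MeasureTheory
set_option maxHeartbeats 1000000

lemma arctan_key (x q : ℝ) (p N : ℕ) (hq : 0 < q) (hp : 6 ≤ p)
    (hx : |x - q| < q * (1 / 2 ^ p))
    (hN : N = 2 ^ (p - 2) * ⌈q ^ 2⌉₊) :
    |Real.arctan x - q / N * ∑ i ∈ Finset.range N, 1 / (1 + ((i : ℝ) / N * q) ^ 2)| <
      |q / N * ∑ i ∈ Finset.range N, 1 / (1 + ((i : ℝ) / N * q) ^ 2)| * (1 / 2 ^ (p - 6)) := by
  obtain ⟨k, rfl⟩ : ∃ k, p = k + 6 := ⟨p - 6, by omega⟩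
  have hp2 : (k + 6) - 2 = k + 4 := by omega
  have hp6 : (k + 6) - 6 = k := by omega
  rw [hp6]
  have hq2 : (0:ℝ) < q ^ 2 := by positivity
  have hceil : (1:ℕ) ≤ ⌈q ^ 2⌉₊ := Nat.one_le_iff_ne_zero.2 (by
    simp [Nat.ceil_eq_zero, not_le, hq2, hq.ne'])
  have hNpos : 0 < N := by
    rw [hN]; positivity
  have hNR : (0:ℝ) < N := by exact_mod_cast hNpos
  have hNge : q ^ 2 * 2 ^ (k + 4) ≤ (N:ℝ) := by
    rw [hN, hp2]
    push_cast
    calc q ^ 2 * 2 ^ (k+4) ≤ (⌈q ^ 2⌉₊ : ℝ) * 2 ^ (k+4) := by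
          gcongr; exact Nat.le_ceil _
      _ = 2 ^ (k+4) * (⌈q ^ 2⌉₊ : ℝ) := by ring
  -- the function and the partition points
  set f : ℝ → ℝ := fun t => 1 / (1 + t ^ 2) with hf
  set a : ℕ → ℝ := fun i => (i : ℝ) / N * q with ha
  have hfc : Continuous f := by
    apply continuous_const.div (by fun_prop)
    intro t; nlinarith [sq_nonneg t]
  have hint : ∀ u v : ℝ, IntervalIntegrable f volume u v := fun u v =>
    hfc.intervalIntegrable u v
  have ha0 : a 0 = 0 := by simp [ha]
  have haN : a N = q := by simp only [ha]; rw [div_self hNR.ne', one_mul]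
  have hmono : ∀ i j : ℕ, i ≤ j → a i ≤ a j := by
    intro i j hij
    have : (i:ℝ) ≤ j := by exact_mod_cast hij
    simp only [ha]
    gcongr
  have hstep : ∀ i : ℕ, a (i + 1) - a i = q / N := by
    intro i; simp only [ha]; push_cast; field_simp; ring
  have hanonneg : ∀ i : ℕ, 0 ≤ a i := fun i => by rw [← ha0]; exact hmono 0 i (Nat.zero_le _)
  -- antitone bound on f
  have hfle : ∀ u v : ℝ, 0 ≤ u → u ≤ v → f v ≤ f u := by
    intro u v hu huv
    apply one_div_le_one_div_of_le (by nlinarith)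
    nlinarith
  have hfpos : ∀ t : ℝ, 0 < f t := fun t => by
    apply div_pos one_pos; nlinarith [sq_nonneg t]
  -- the Riemann sum
  set S : ℝ := q / N * ∑ i ∈ Finset.range N, 1 / (1 + ((i : ℝ) / N * q) ^ 2) with hS
  have hSsum : S = ∑ i ∈ Finset.range N, q / N * f (a i) := by
    rw [hS, Finset.mul_sum]
  -- integral decomposition
  have hdecomp : ∑ i ∈ Finset.range N, ∫ t in (a i)..(a (i+1)), f t = Real.arctan q := by
    rw [intervalIntegral.sum_integral_adjacent_intervals (fun i _ => hint _ _), ha0, haN]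
    simp [hf, integral_one_div_one_add_sq, Real.arctan_zero]
  -- per-piece bounds
  have hupper : ∀ i ∈ Finset.range N, (∫ t in (a i)..(a (i+1)), f t) ≤ q / N * f (a i) := by
    intro i _
    have h1 : a i ≤ a (i+1) := hmono i (i+1) (Nat.le_succ i)
    calc (∫ t in (a i)..(a (i+1)), f t)
        ≤ ∫ _ in (a i)..(a (i+1)), f (a i) :=
          intervalIntegral.integral_mono_on h1 (hint _ _)
            (intervalIntegrable_const) (fun t ht => hfle (a i) t (hanonneg i) ht.1)
      _ = q / N * f (a i) := by rw [intervalIntegral.integral_const, smul_eq_mul, hstep]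
  have hlower : ∀ i ∈ Finset.range N, q / N * f (a (i+1)) ≤ ∫ t in (a i)..(a (i+1)), f t := by
    intro i _
    have h1 : a i ≤ a (i+1) := hmono i (i+1) (Nat.le_succ i)
    calc q / N * f (a (i+1))
        = ∫ _ in (a i)..(a (i+1)), f (a (i+1)) := by
          rw [intervalIntegral.integral_const, smul_eq_mul, hstep]
      _ ≤ ∫ t in (a i)..(a (i+1)), f t :=
          intervalIntegral.integral_mono_on h1 (intervalIntegrable_const) (hint _ _)
            (fun t ht => hfle t (a (i+1)) (le_trans (hanonneg i) ht.1) ht.2)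
  -- arctan q ≤ S
  have h1 : Real.arctan q ≤ S := by
    rw [hSsum, ← hdecomp]
    exact Finset.sum_le_sum hupper
  -- S ≤ arctan q + q/N * (1 - f q)
  have htel : ∑ i ∈ Finset.range N, q / N * f (a (i+1))
      = S - q / N * f (a 0) + q / N * f (a N) := by
    rw [hSsum]
    have h2 := Finset.sum_range_succ' (fun i => q / (N:ℝ) * f (a i)) N
    have h3 : ∑ i ∈ Finset.range (N+1), q / N * f (a i)
        = ∑ i ∈ Finset.range N, q / N * f (a i) + q / N * f (a N) :=
      Finset.sum_range_succ _ _
    linarith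
  have h2 : S ≤ Real.arctan q + q / N * (q ^ 2 / (1 + q ^ 2)) := by
    have := Finset.sum_le_sum hlower
    rw [htel, hdecomp, ha0, haN] at this
    have hf0 : f 0 = 1 := by simp [hf]
    have hfq : f q = 1 / (1 + q ^ 2) := rfl
    rw [hf0, hfq] at this
    have : S - q / N * 1 + q / N * (1 / (1 + q^2)) ≤ Real.arctan q := this
    have hid : q / N * (q ^ 2 / (1 + q ^ 2)) = q / N * 1 - q / N * (1 / (1 + q^2)) := by
      field_simp
      ring
    linarith
  -- S ≥ q / (1 + q^2)
  have hSlb : q / (1 + q ^ 2) ≤ S := by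
    rw [hSsum]
    calc q / (1 + q ^ 2) = ∑ _i ∈ Finset.range N, q / N * (1 / (1 + q ^ 2)) := by
          rw [Finset.sum_const, Finset.card_range, nsmul_eq_mul]
          field_simp
      _ ≤ ∑ i ∈ Finset.range N, q / N * f (a i) := by
          apply Finset.sum_le_sum
          intro i hi
          have hiN : (i:ℝ) ≤ N := by
            have := Finset.mem_range.1 hi
            exact_mod_cast this.le
          have haiq : a i ≤ q := by
            calc a i ≤ a N := hmono i N (by exact_mod_cast Finset.mem_range.1 hi |>.le)
              _ = q := haN
          have : f q ≤ f (a i) := hfle (a i) q (hanonneg i) haiq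
          have hfq : f q = 1 / (1 + q ^ 2) := rfl
          apply mul_le_mul_of_nonneg_left _ (by positivity : (0:ℝ) ≤ q / N)
          rw [← hfq]; exact this
  have hSpos : 0 < S := lt_of_lt_of_le (by positivity) hSlb
  -- arctan Lipschitz bound near q
  have harc : |Real.arctan x - Real.arctan q| ≤ 2 / (1 + q ^ 2) * (q * (1 / 2 ^ (k+6))) := by
    set s : Set ℝ := Set.Icc (q - q/64) (q + q/64) with hs
    have hconv : Convex ℝ s := convex_Icc _ _
    have hd : ∀ t ∈ s, HasDerivWithinAt Real.arctan (1 / (1 + t ^ 2)) s t := fun t _ =>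
      (Real.hasDerivAt_arctan t).hasDerivWithinAt
    have hbound : ∀ t ∈ s, ‖1 / (1 + t ^ 2)‖ ≤ 2 / (1 + q ^ 2) := by
      intro t ht
      have ht1 : q - q/64 ≤ t := ht.1
      have htpos : 0 < 1 + t ^ 2 := by nlinarith [sq_nonneg t]
      rw [Real.norm_eq_abs, abs_of_pos (by positivity)]
      rw [div_le_div_iff₀ htpos (by positivity)]
      nlinarith [sq_nonneg (t - q)]
    have h64 : (64:ℝ) ≤ 2 ^ (k+6) := by
      calc (64:ℝ) = 2 ^ 6 := by norm_num
        _ ≤ 2 ^ (k+6) := by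
            apply pow_le_pow_right₀ (by norm_num)
            omega
    have hxq : |x - q| ≤ q / 64 := by
      refine le_trans hx.le ?_
      rw [mul_one_div]
      gcongr
    have hxq1 := abs_sub_le_iff.1 hxq
    have hxs : x ∈ s := by
      rw [hs]
      constructor <;> [linarith [hxq1.2]; linarith [hxq1.1]]
    have hqs : q ∈ s := by
      rw [hs]
      have : 0 ≤ q / 64 := by positivity
      constructor <;> linarith
    have := hconv.norm_image_sub_le_of_norm_hasDerivWithin_le hd hbound hqs hxs
    rw [Real.norm_eq_abs, Real.norm_eq_abs] at this
    calc |Real.arctan x - Real.arctan q| ≤ 2 / (1 + q^2) * |x - q| := this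
      _ ≤ 2 / (1 + q ^ 2) * (q * (1 / 2 ^ (k+6))) := by
          have := hx.le
          gcongr
  -- Riemann error bound
  have hrie : |Real.arctan q - S| ≤ 4 * q / ((1 + q ^ 2) * 2 ^ (k+6)) := by
    rw [abs_sub_le_iff]
    constructor
    · linarith [sub_nonneg.2 h1, (by positivity : (0:ℝ) ≤ 4 * q / ((1 + q ^ 2) * 2 ^ (k+6)))]
    · have herr : q / N * (q ^ 2 / (1 + q ^ 2)) ≤ 4 * q / ((1 + q ^ 2) * 2 ^ (k+6)) := by
        rw [div_mul_div_comm, div_le_div_iff₀ (by positivity) (by positivity)]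
        have h24 : (2:ℝ) ^ (k+6) = 4 * 2 ^ (k+4) := by ring
        calc q * q ^ 2 * ((1 + q ^ 2) * 2 ^ (k+6))
            = (q * (1 + q^2)) * (q ^ 2 * 2 ^ (k+4)) * 4 := by rw [h24]; ring
          _ ≤ (q * (1 + q^2)) * N * 4 := by
              gcongr
          _ = 4 * q * (N * (1 + q ^ 2)) := by ring
      linarith
  -- put it together
  have htot : |Real.arctan x - S| ≤ 6 * q / ((1 + q ^ 2) * 2 ^ (k+6)) := by
    calc |Real.arctan x - S| ≤ |Real.arctan x - Real.arctan q| + |Real.arctan q - S| :=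
          abs_sub_le _ _ _
      _ ≤ 2 / (1 + q ^ 2) * (q * (1 / 2 ^ (k+6))) + 4 * q / ((1 + q ^ 2) * 2 ^ (k+6)) := by
          linarith
      _ = 6 * q / ((1 + q ^ 2) * 2 ^ (k+6)) := by
          field_simp
          ring
  have hfinal : 6 * q / ((1 + q ^ 2) * 2 ^ (k+6)) < |S| * (1 / 2 ^ k) := by
    rw [abs_of_pos hSpos]
    have h64 : (2:ℝ) ^ (k+6) = 2 ^ k * 64 := by ring
    calc 6 * q / ((1 + q ^ 2) * 2 ^ (k+6)) < 64 * q / ((1 + q ^ 2) * 2 ^ (k+6)) := by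
          apply (div_lt_div_iff_of_pos_right (by positivity)).2
          linarith
      _ = q / (1 + q^2) * (1 / 2 ^ k) := by rw [h64]; field_simp
      _ ≤ S * (1 / 2 ^ k) := by gcongr
  exact lt_of_le_of_lt htot hfinal

/-- Riemann-sum approximation of `arctan x`: if `x` is represented by `(m, n, p)` with
`p ≥ 6` and `N = 2 ^ (p - 2) * ⌈(m/n) ^ 2⌉`, then the Riemann sum
`S = ((m/n) / N) * ∑_{i=0}^{N-1} 1 / (1 + ((i / N) * (m/n)) ^ 2)` approximates
`arctan x` with relative error less than `1 / 2 ^ (p - 6)`. -/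
theorem arctan_represented (x : ℝ) (m n : ℤ) (p N : ℕ)
    (hm : m ≠ 0) (hn : n ≠ 0) (hp : 6 ≤ p)
    (hx : |x - (m : ℝ) / (n : ℝ)| < |(m : ℝ) / (n : ℝ)| * (1 / 2 ^ p))
    (hN : N = 2 ^ (p - 2) * ⌈((m : ℝ) / (n : ℝ)) ^ 2⌉₊) :
    |Real.arctan x -
        (m : ℝ) / (n : ℝ) / N *
          ∑ i ∈ Finset.range N, 1 / (1 + ((i : ℝ) / N * ((m : ℝ) / (n : ℝ))) ^ 2)| <
      |(m : ℝ) / (n : ℝ) / N *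
          ∑ i ∈ Finset.range N, 1 / (1 + ((i : ℝ) / N * ((m : ℝ) / (n : ℝ))) ^ 2)| *
        (1 / 2 ^ (p - 6)) := by
  set q : ℝ := (m : ℝ) / (n : ℝ) with hqdef
  have hq0 : q ≠ 0 := div_ne_zero (Int.cast_ne_zero.2 hm) (Int.cast_ne_zero.2 hn)
  rcases hq0.lt_or_gt with h | h
  · have hneg := arctan_key (-x) (-q) p N (by linarith) hp
      (by rw [show -x - -q = -(x - q) by ring, abs_neg]
          calc |x - q| < |q| * (1 / 2 ^ p) := hx
            _ = -q * (1 / 2 ^ p) := by rw [abs_of_neg h])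
      (by rw [neg_sq]; exact hN)
    have hsum : ∑ i ∈ Finset.range N, 1 / (1 + ((i : ℝ) / N * -q) ^ 2)
        = ∑ i ∈ Finset.range N, 1 / (1 + ((i : ℝ) / N * q) ^ 2) := by
      refine Finset.sum_congr rfl fun i _ => ?_
      rw [mul_neg, neg_sq]
    rw [Real.arctan_neg, hsum] at hneg
    have h2 : -q / (N : ℝ) * ∑ i ∈ Finset.range N, 1 / (1 + ((i : ℝ) / N * q) ^ 2)
        = -(q / (N : ℝ) * ∑ i ∈ Finset.range N, 1 / (1 + ((i : ℝ) / N * q) ^ 2)) := by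
      ring
    rw [h2, show ∀ A B : ℝ, -A - -B = -(A - B) from fun A B => by ring, abs_neg, abs_neg] at hneg
    exact hneg
  · exact arctan_key x q p N h hp (by rwa [abs_of_pos h] at hx) hN
end

section
/- Let x be a real number represented by (m,n,p) with -1 < m/n < 1. Let N be an odd natural number satisfying (5/6) · (2N+2)! · (2N-1)² / 2^(2N) > 2^p, and assume p ≥ 2⌈log₂(2N-1)⌉ + 3. Define the Taylor polynomial S = Σ_{i=0}^{N} (-1)^i · (m/n)^(2i+1) / (2i+1)!. Then sin(x) is approximated by S with relative error less than 1/2^(p - 2⌈log₂(2N-1)⌉ - 3); that is, |sin(x) - S| < |S| * (1/2^(p - 2⌈log₂(2N-1)⌉ - 3)). -/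
lemma fact_grow (a : ℕ) (ha : 5 ≤ a) : ∀ k : ℕ, 6 ^ k * a.factorial ≤ (a + 2 * k).factorial := by
  intro k
  induction k with
  | zero => simp
  | succ k ih =>
    have h1 : a + 2 * (k + 1) = (a + 2 * k + 1) + 1 := by ring
    rw [h1, Nat.factorial_succ, Nat.factorial_succ]
    calc 6 ^ (k+1) * a.factorial = 6 * (6 ^ k * a.factorial) := by ring
    _ ≤ 6 * (a + 2*k).factorial := by omega
    _ ≤ (a + 2*k+1+1) * ((a+2*k+1) * (a+2*k).factorial) := by
        exact Nat.mul_le_mul (by omega) (Nat.le_mul_of_pos_left _ (by omega))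

lemma sin_tail (y : ℝ) (hy : |y| ≤ 1) (N : ℕ) (h1 : 1 ≤ N) :
    |Real.sin y - ∑ i ∈ Finset.range (N + 1), (-1:ℝ) ^ i * y ^ (2 * i + 1) / (Nat.factorial (2*i+1))|
      ≤ 6/5 * |y| ^ (2*N+3) / (Nat.factorial (2*N+3)) := by
  set f : ℕ → ℝ := fun i => (-1:ℝ) ^ i * y ^ (2 * i + 1) / (Nat.factorial (2*i+1)) with hf
  have hs : HasSum f (Real.sin y) := Real.hasSum_sin y
  have hsum : Summable f := hs.summable
  have hsplit : Real.sin y - ∑ i ∈ Finset.range (N+1), f i = ∑' k, f (k + (N+1)) := by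
    have := Summable.sum_add_tsum_nat_add (f := f) (N+1) hsum
    rw [hs.tsum_eq] at this
    linarith
  set C : ℝ := |y| ^ (2*N+3) / (Nat.factorial (2*N+3)) with hC
  have hC0 : 0 ≤ C := by positivity
  set g : ℕ → ℝ := fun k => C * (1/6) ^ k with hg
  have hgs : Summable g := (summable_geometric_of_lt_one (by norm_num) (by norm_num)).mul_left C
  have hbound : ∀ k, |f (k + (N+1))| ≤ g k := by
    intro k
    have he : 2 * (k + (N+1)) + 1 = 2*N+3 + 2*k := by ring
    have hfv : |f (k + (N+1))| = |y| ^ (2*N+3+2*k) / (Nat.factorial (2*N+3+2*k)) := by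
      rw [hf]
      simp only [abs_div, abs_mul, abs_pow, abs_neg, abs_one, one_pow, one_mul, he,
        Nat.abs_cast]
    rw [hfv, hg]
    have hy1 : |y| ^ (2*N+3+2*k) ≤ |y| ^ (2*N+3) := by
      apply pow_le_pow_of_le_one (abs_nonneg y) hy; omega
    have hfa : (6:ℝ) ^ k * (Nat.factorial (2*N+3)) ≤ (Nat.factorial (2*N+3+2*k)) := by
      exact_mod_cast fact_grow (2*N+3) (by omega) k
    have hfp : (0:ℝ) < (Nat.factorial (2*N+3)) := by positivity
    have hfp2 : (0:ℝ) < (Nat.factorial (2*N+3+2*k)) := by positivity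
    rw [div_le_iff₀ hfp2, hC]
    have h6 : (0:ℝ) < 6 ^ k := by positivity
    calc |y| ^ (2*N+3+2*k) ≤ |y| ^ (2*N+3) := hy1
    _ = |y| ^ (2*N+3) / (Nat.factorial (2*N+3)) * (1/6)^k * (6^k * (Nat.factorial (2*N+3))) := by
        field_simp
        rw [mul_assoc, ← mul_pow]; norm_num
    _ ≤ |y| ^ (2*N+3) / (Nat.factorial (2*N+3)) * (1/6)^k * (Nat.factorial (2*N+3+2*k)) := by
        apply mul_le_mul_of_nonneg_left hfa; positivity
  have habs : Summable fun k => |f (k + (N+1))| := by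
    apply Summable.of_nonneg_of_le (fun k => abs_nonneg _) hbound hgs
  rw [hsplit]
  calc |∑' k, f (k + (N+1))| ≤ ∑' k, |f (k + (N+1))| := by
        simpa [Real.norm_eq_abs] using
          norm_tsum_le_tsum_norm (f := fun k => f (k+(N+1)))
            (by simpa [Real.norm_eq_abs] using habs)
  _ ≤ ∑' k, g k := Summable.tsum_le_tsum hbound habs hgs
  _ = C * (1 - 1/6)⁻¹ := by
        rw [hg]; rw [tsum_mul_left, tsum_geometric_of_lt_one (by norm_num) (by norm_num)]
  _ = 6/5 * C := by ring
  _ = 6/5 * |y| ^ (2*N+3) / (Nat.factorial (2*N+3)) := by rw [hC]; ring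

lemma sin_lower_bd (y : ℝ) (h0 : y ≠ 0) (h1 : |y| < 1) : 3/4* |y| ≤ |Real.sin y| := by
  have hpos : 0 < |y| := abs_pos.mpr h0
  have h2 : |y| - |y|^3/4 < Real.sin |y| := by
    have := Real.sin_gt_sub_cube hpos
    linarith [pow_nonneg hpos.le 3]
  have h3 : Real.sin |y| ≤ |Real.sin y| := by
    rcases abs_choice y with h | h
    · rw [h]; exact le_abs_self _
    · rw [h, Real.sin_neg]; exact neg_le_abs _
  have h4 : |y|^3 ≤ |y| := by
    calc |y|^3 ≤ |y|^1 := pow_le_pow_of_le_one (abs_nonneg y) h1.le (by omega)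
    _ = |y| := pow_one _
  linarith

set_option maxHeartbeats 1000000 in


/-- Taylor approximation of `sin x` in the base interval: if `x` is represented by
`(m, n, p)` with `-1 < m/n < 1`, `N` is odd with
`(5/6) * (2N+2)! * (2N-1)^2 / 2^(2N) > 2^p`, and `p ≥ 2 ⌈log₂ (2N-1)⌉ + 3`, then the
Taylor polynomial `S = ∑_{i=0}^{N} (-1)^i (m/n)^(2i+1) / (2i+1)!` approximates
`sin x` with relative error less than `1 / 2 ^ (p - 2 ⌈log₂ (2N-1)⌉ - 3)`. -/
theorem sin_represented_base (x : ℝ) (m n : ℤ) (p N : ℕ)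
    (hm : m ≠ 0) (hn : n ≠ 0)
    (hx : |x - (m : ℝ) / (n : ℝ)| < |(m : ℝ) / (n : ℝ)| * (1 / 2 ^ p))
    (hmn₀ : -1 < (m : ℝ) / (n : ℝ)) (hmn₁ : (m : ℝ) / (n : ℝ) < 1)
    (hNodd : Odd N)
    (hN : (5 : ℝ) / 6 * (Nat.factorial (2 * N + 2)) * (2 * (N : ℝ) - 1) ^ 2 / 2 ^ (2 * N)
        > 2 ^ p)
    (hp : 2 * Nat.clog 2 (2 * N - 1) + 3 ≤ p) :
    |Real.sin x -
        ∑ i ∈ Finset.range (N + 1),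
          (-1 : ℝ) ^ i * ((m : ℝ) / (n : ℝ)) ^ (2 * i + 1) / (Nat.factorial (2 * i + 1))| <
      |∑ i ∈ Finset.range (N + 1),
          (-1 : ℝ) ^ i * ((m : ℝ) / (n : ℝ)) ^ (2 * i + 1) / (Nat.factorial (2 * i + 1))| *
        (1 / 2 ^ (p - 2 * Nat.clog 2 (2 * N - 1) - 3)) := by
  set y : ℝ := (m:ℝ)/(n:ℝ) with hy
  have hy0 : y ≠ 0 := div_ne_zero (Int.cast_ne_zero.mpr hm) (Int.cast_ne_zero.mpr hn)
  have hyabs : |y| < 1 := abs_lt.mpr ⟨hmn₀, hmn₁⟩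
  have hypos : 0 < |y| := abs_pos.mpr hy0
  obtain ⟨j, hj⟩ := hNodd
  have h1 : 1 ≤ N := by omega
  set c := Nat.clog 2 (2*N-1) with hc
  set q := p - 2*c - 3 with hqd
  have hpq : p = q + (2*c+3) := by omega
  set F : ℝ := (Nat.factorial (2*N+3) : ℝ) with hF
  have hF0 : 0 < F := by positivity
  have hF120 : (120:ℝ) ≤ F := by
    have h5 : (120:ℕ) ≤ Nat.factorial (2*N+3) := by
      have := Nat.factorial_le (show 5 ≤ 2*N+3 by omega)
      simpa [Nat.factorial] using this
    rw [hF]; exact_mod_cast h5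
  set S : ℝ := ∑ i ∈ Finset.range (N + 1),
      (-1 : ℝ) ^ i * y ^ (2 * i + 1) / (Nat.factorial (2 * i + 1)) with hS
  have htail : |Real.sin y - S| ≤ 6/5* |y|^(2*N+3)/F := sin_tail y hyabs.le N h1
  have hyp1 : |y|^(2*N+3) ≤ |y| := by
    calc |y|^(2*N+3) ≤ |y|^1 := pow_le_pow_of_le_one (abs_nonneg y) hyabs.le (by omega)
    _ = |y| := pow_one _
  have htail' : |Real.sin y - S| ≤ 6/5* |y|/F := by
    refine le_trans htail ?_
    gcongr
  have hsin : 3/4* |y| ≤ |Real.sin y| := sin_lower_bd y hy0 hyabs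
  have hSlow : 2/3* |y| ≤ |S| := by
    have h5 : |Real.sin y| - |S| ≤ |Real.sin y - S| := abs_sub_abs_le_abs_sub _ _
    have h6 : 6/5* |y|/F ≤ 6/5* |y|/120 := by gcongr
    have h7 : 6/5* |y|/120 = 1/100* |y| := by ring
    linarith
  have hlip : |Real.sin x - Real.sin y| ≤ |x - y| := by
    rw [Real.sin_sub_sin, abs_mul, abs_mul, abs_two]
    have ha : |Real.sin ((x-y)/2)| ≤ |(x-y)/2| := Real.abs_sin_le_abs
    have hb : |Real.cos ((x+y)/2)| ≤ 1 := Real.abs_cos_le_one _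
    have he : |(x-y)/2| = |x-y|/2 := by rw [abs_div, abs_two]
    nlinarith [abs_nonneg (Real.sin ((x-y)/2)), abs_nonneg (Real.cos ((x+y)/2)),
      abs_nonneg (x-y)]
  have herr : |Real.sin x - S| < |y| *(1/2^p) + 6/5* |y|/F := by
    calc |Real.sin x - S| ≤ |Real.sin x - Real.sin y| + |Real.sin y - S| := abs_sub_le _ _ _
    _ < |y| *(1/2^p) + 6/5* |y|/F := by linarith
  -- arithmetic
  have hp0 : (0:ℝ) < 2^p := by positivity
  have hq0 : (0:ℝ) < 2^q := by positivity
  set D : ℝ := 2*(N:ℝ)-1 with hD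
  have hDeq : D = ((2*N-1:ℕ):ℝ) := by
    rw [hD, Nat.cast_sub (by omega : 1 ≤ 2*N)]
    push_cast
    ring
  have hD1 : 1 ≤ D := by
    rw [hD]
    have : (1:ℝ) ≤ (N:ℝ) := by exact_mod_cast h1
    linarith
  have hDc : D ≤ 2^c := by
    rw [hDeq]
    have h := Nat.le_pow_clog (b := 2) one_lt_two (2*N-1)
    calc ((2*N-1:ℕ):ℝ) ≤ ((2^c : ℕ):ℝ) := by exact_mod_cast h
    _ = 2^c := by push_cast; ring
  have hD2 : D^2 ≤ 2^(2*c) := by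
    have h8 : (2:ℝ)^(2*c) = (2^c)^2 := by rw [mul_comm, pow_mul]
    rw [h8]
    exact pow_le_pow_left₀ (by linarith) hDc 2
  have h2p : (2:ℝ)^p = 2^q * 2^(2*c) * 8 := by
    rw [hpq, pow_add, pow_add]; ring
  have hGF : ((Nat.factorial (2*N+2)):ℝ) ≤ F := by
    have h11 : Nat.factorial (2*N+2) ≤ Nat.factorial (2*N+3) := Nat.factorial_le (by omega)
    rw [hF]; exact_mod_cast h11
  have h2N1 : (1:ℝ) ≤ 2^(2*N) := by
    have : (1:ℕ) ≤ 2^(2*N) := Nat.one_le_two_pow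
    exact_mod_cast this
  have hkey : (2:ℝ)^p ≤ 5/6 * F * D^2 := by
    have hGD : (0:ℝ) ≤ 5/6 * (Nat.factorial (2*N+2)) * D^2 := by positivity
    have h9 : (5:ℝ)/6 * (Nat.factorial (2*N+2)) * D^2 / 2^(2*N)
        ≤ 5/6 * (Nat.factorial (2*N+2)) * D^2 := div_le_self hGD h2N1
    have h10 : (5:ℝ)/6 * (Nat.factorial (2*N+2)) * D^2 ≤ 5/6 * F * D^2 :=
      mul_le_mul_of_nonneg_right (mul_le_mul_of_nonneg_left hGF (by norm_num)) (sq_nonneg D)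
    linarith [hN, h9, h10]
  have hmain : 1/2^p + 6/5/F ≤ 2/3*(1/2^q) := by
    have e1 : (1:ℝ)/2^q = 2^(2*c)*8/2^p := by
      rw [h2p]; field_simp
    have e2 : 6/5/F ≤ 13/3*D^2/2^p := by
      rw [div_le_div_iff₀ hF0 hp0]
      nlinarith [hkey, mul_nonneg (sq_nonneg D) hF0.le]
    have e3 : (1:ℝ)/2^p ≤ D^2/2^p := by
      gcongr
      nlinarith [hD1]
    have e4 : (16:ℝ)/3*(D^2/2^p) ≤ 16/3*(2^(2*c)/2^p) := by gcongr
    rw [e1]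
    have e5 : (2:ℝ)/3*(2^(2*c)*8/2^p) = 16/3*(2^(2*c)/2^p) := by ring
    have e6 : D^2/2^p + 13/3*D^2/2^p = 16/3*(D^2/2^p) := by ring
    linarith
  have harith : |y| *(1/2^p) + 6/5* |y|/F ≤ 2/3* |y| *(1/2^q) := by
    have := mul_le_mul_of_nonneg_left hmain (abs_nonneg y)
    calc |y| *(1/2^p) + 6/5* |y|/F = |y| * (1/2^p + 6/5/F) := by ring
    _ ≤ |y| * (2/3*(1/2^q)) := this
    _ = 2/3* |y| *(1/2^q) := by ring
  calc |Real.sin x - S| < |y| *(1/2^p) + 6/5* |y|/F := herr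
  _ ≤ 2/3* |y| *(1/2^q) := harith
  _ ≤ |S| * (1/2^q) := by
      apply mul_le_mul_of_nonneg_right (by linarith) (by positivity)
end

section
/- Let x be a real number represented by (m,n,p) with -1 < m/n < 1. Let N be an odd natural number satisfying (2N+1)! · (2N-2)² / 2^(2N) > 2^p, and assume p ≥ 2⌈log₂(2N-2)⌉ + 3. Define the Taylor polynomial S = Σ_{i=0}^{N} (-1)^i · (m/n)^(2i) / (2i)!. Then cos(x) is approximated by S with relative error less than 1/2^(p - 2⌈log₂(2N-2)⌉ - 3); that is, |cos(x) - S| < |S| * (1/2^(p - 2⌈log₂(2N-2)⌉ - 3)). -/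
lemma cos_tail_bound (r : ℝ) (hr : |r| ≤ 1) (N : ℕ) :
    |Real.cos r - ∑ i ∈ Finset.range (N + 1),
        (-1 : ℝ) ^ i * r ^ (2 * i) / (Nat.factorial (2 * i))| ≤
      2 / (Nat.factorial (2 * N + 2)) := by
  set f : ℕ → ℝ := fun i => (-1 : ℝ) ^ i * r ^ (2 * i) / (Nat.factorial (2 * i)) with hf
  clear_value f
  have hsum : HasSum f (Real.cos r) := hf ▸ Real.hasSum_cos r
  have hsummable : Summable f := hsum.summable
  have htail : Summable fun i => f (i + (N + 1)) := (summable_nat_add_iff (N + 1)).2 hsummable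
  have hsplit : ∑ i ∈ Finset.range (N + 1), f i + ∑' i, f (i + (N + 1)) = Real.cos r := by
    rw [Summable.sum_add_tsum_nat_add (N+1) hsummable, hsum.tsum_eq]
  have heq : Real.cos r - ∑ i ∈ Finset.range (N + 1), f i = ∑' i, f (i + (N + 1)) := by
    linarith
  rw [heq]
  have hFpos : (0:ℝ) < (Nat.factorial (2 * N + 2) : ℝ) := by positivity
  have hb : ∀ i : ℕ, |f (i + (N + 1))| ≤ (1 / (Nat.factorial (2 * N + 2) : ℝ)) * (1/2) ^ i := by
    intro i
    have h1 : |f (i + (N + 1))| = |r| ^ (2 * (i + (N+1))) / (Nat.factorial (2 * (i + (N+1))) : ℝ) := by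
      rw [hf]
      simp [abs_div, abs_mul, abs_pow, Nat.abs_cast]
    rw [h1]
    have h2 : |r| ^ (2 * (i + (N+1))) ≤ 1 := pow_le_one₀ (abs_nonneg r) hr
    have h3 : (Nat.factorial (2*N+2) : ℝ) * 2 ^ i ≤ (Nat.factorial (2 * (i + (N+1))) : ℝ) := by
      have : Nat.factorial (2*N+2) * (2*N+3) ^ (2*i) ≤ Nat.factorial ((2*N+2) + 2*i) :=
        Nat.factorial_mul_pow_le_factorial
      have h4 : 2 ^ i ≤ (2*N+3) ^ (2*i) := by
        calc 2 ^ i ≤ (2*N+3) ^ i := Nat.pow_le_pow_left (by omega) i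
        _ ≤ (2*N+3) ^ (2*i) := Nat.pow_le_pow_right (by omega) (by omega)
      have h5 : Nat.factorial (2*N+2) * 2 ^ i ≤ Nat.factorial ((2*N+2) + 2*i) :=
        le_trans (Nat.mul_le_mul_left _ h4) this
      have h6 : 2 * (i + (N+1)) = (2*N+2) + 2*i := by ring
      rw [h6]
      exact_mod_cast h5
    calc |r| ^ (2 * (i + (N+1))) / (Nat.factorial (2 * (i + (N+1))) : ℝ)
        ≤ 1 / (Nat.factorial (2 * (i + (N+1))) : ℝ) := by
          apply div_le_div_of_nonneg_right h2 (by positivity) |>.trans_eq rfl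
      _ ≤ 1 / ((Nat.factorial (2*N+2) : ℝ) * 2 ^ i) := by
          apply one_div_le_one_div_of_le (by positivity) h3
      _ = (1 / (Nat.factorial (2 * N + 2) : ℝ)) * (1/2) ^ i := by
          rw [one_div_pow]
          field_simp
  calc |∑' i, f (i + (N + 1))| ≤ ∑' i, |f (i + (N + 1))| := by
        have habs : Summable fun i => |f (i + (N + 1))| := htail.abs
        simpa [Real.norm_eq_abs] using
          norm_tsum_le_tsum_norm (f := fun i => f (i + (N + 1)))
            (by simpa [Real.norm_eq_abs] using habs)
    _ ≤ ∑' i : ℕ, (1 / (Nat.factorial (2 * N + 2) : ℝ)) * (1/2) ^ i := by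
        apply Summable.tsum_le_tsum hb htail.abs
        exact (summable_geometric_of_lt_one (by norm_num) (by norm_num)).mul_left _
    _ = 2 / (Nat.factorial (2 * N + 2)) := by
        rw [tsum_mul_left, tsum_geometric_of_lt_one (by norm_num) (by norm_num)]
        norm_num
        ring

/-- Taylor approximation of `cos x` in the base interval: if `x` is represented by
`(m, n, p)` with `-1 < m/n < 1`, `N` is odd with
`(2N+1)! * (2N-2)^2 / 2^(2N) > 2^p`, and `p ≥ 2 ⌈log₂ (2N-2)⌉ + 3`, then the Taylor
polynomial `S = ∑_{i=0}^{N} (-1)^i (m/n)^(2i) / (2i)!` approximates `cos x` with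
relative error less than `1 / 2 ^ (p - 2 ⌈log₂ (2N-2)⌉ - 3)`. -/
theorem cos_represented_base (x : ℝ) (m n : ℤ) (p N : ℕ)
    (hm : m ≠ 0) (hn : n ≠ 0)
    (hx : |x - (m : ℝ) / (n : ℝ)| < |(m : ℝ) / (n : ℝ)| * (1 / 2 ^ p))
    (hmn₀ : -1 < (m : ℝ) / (n : ℝ)) (hmn₁ : (m : ℝ) / (n : ℝ) < 1)
    (hNodd : Odd N)
    (hN : (Nat.factorial (2 * N + 1) : ℝ) * (2 * (N : ℝ) - 2) ^ 2 / 2 ^ (2 * N) > 2 ^ p)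
    (hp : 2 * Nat.clog 2 (2 * N - 2) + 3 ≤ p) :
    |Real.cos x -
        ∑ i ∈ Finset.range (N + 1),
          (-1 : ℝ) ^ i * ((m : ℝ) / (n : ℝ)) ^ (2 * i) / (Nat.factorial (2 * i))| <
      |∑ i ∈ Finset.range (N + 1),
          (-1 : ℝ) ^ i * ((m : ℝ) / (n : ℝ)) ^ (2 * i) / (Nat.factorial (2 * i))| *
        (1 / 2 ^ (p - 2 * Nat.clog 2 (2 * N - 2) - 3)) := by
  have hr1 : |(m : ℝ) / (n : ℝ)| < 1 := abs_lt.2 ⟨hmn₀, hmn₁⟩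
  set r : ℝ := (m : ℝ) / (n : ℝ) with hrdef
  set c : ℕ := Nat.clog 2 (2 * N - 2) with hcdef
  set S : ℝ := ∑ i ∈ Finset.range (N + 1),
      (-1 : ℝ) ^ i * r ^ (2 * i) / (Nat.factorial (2 * i)) with hSdef
  have hPpos : (0:ℝ) < 2 ^ p := by positivity
  -- N ≥ 3
  have hN3 : 3 ≤ N := by
    by_contra h
    push_neg at h
    have hN1 : N = 1 := by rcases hNodd with ⟨k, hk⟩; omega
    subst hN1
    norm_num at hN
    linarith
  -- basic quantities
  have htail0 := cos_tail_bound r hr1.le N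
  rw [← hSdef] at htail0
  have hfacpos : (0:ℝ) < (Nat.factorial (2 * N + 2) : ℝ) := by positivity
  have hfac1pos : (0:ℝ) < (Nat.factorial (2 * N + 1) : ℝ) := by positivity
  -- Lipschitz bound
  have hlip : |Real.cos x - Real.cos r| ≤ |x - r| := by
    rw [Real.cos_sub_cos, abs_mul, abs_mul]
    have h1 := Real.abs_sin_le_one ((x + r) / 2)
    have h2 := Real.abs_sin_le_abs (x := (x - r) / 2)
    have h3 : |(x - r) / 2| = |x - r| / 2 := by rw [abs_div]; norm_num
    rw [h3] at h2
    have h4 : |(-2 : ℝ)| = 2 := by norm_num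
    rw [h4]
    nlinarith [abs_nonneg (Real.sin ((x + r) / 2)), abs_nonneg (Real.sin ((x - r) / 2)),
      abs_nonneg (x - r)]
  have hxr : |x - r| < 1 / 2 ^ p := by
    calc |x - r| < |r| * (1 / 2 ^ p) := hx
      _ ≤ 1 * (1 / 2 ^ p) := by
          apply mul_le_mul_of_nonneg_right hr1.le (by positivity)
      _ = 1 / 2 ^ p := one_mul _
  -- lower bound on cos r and S
  have hr2 : r ^ 2 < 1 := by
    calc r ^ 2 = |r| ^ 2 := (sq_abs r).symm
      _ < 1 := by nlinarith [abs_nonneg r]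
  have hcos : 1 - r ^ 2 / 2 ≤ Real.cos r := Real.one_sub_sq_div_two_le_cos
  have hfac8 : (40320 : ℝ) ≤ (Nat.factorial (2 * N + 2) : ℝ) := by
    have h1 : Nat.factorial 8 ≤ Nat.factorial (2 * N + 2) := Nat.factorial_le (by omega)
    have h2 : Nat.factorial 8 = 40320 := by decide
    exact_mod_cast h2 ▸ h1
  have htail : |Real.cos r - S| ≤ 2 / 40320 := by
    refine htail0.trans ?_
    apply div_le_div_of_nonneg_left (by norm_num) (by norm_num) hfac8
  have hS_lb : (49 / 100 : ℝ) ≤ S := by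
    have h1 := abs_le.1 htail
    linarith [h1.1, h1.2]
  have hSabs : |S| = S := abs_of_pos (by linarith)
  clear_value S
  clear hSdef
  -- clog bound
  have hclog : (2 * (N : ℝ) - 2) ≤ 2 ^ c := by
    have h1 : (2 * N - 2 : ℕ) ≤ 2 ^ c := Nat.le_pow_clog one_lt_two _
    have h2 : ((2 * N - 2 : ℕ) : ℝ) = 2 * (N : ℝ) - 2 := by
      have h3 : (2 : ℕ) ≤ 2 * N := by omega
      push_cast [h3]
      ring
    calc (2 * (N : ℝ) - 2) = ((2 * N - 2 : ℕ) : ℝ) := h2.symm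
      _ ≤ ((2 ^ c : ℕ) : ℝ) := by exact_mod_cast h1
      _ = 2 ^ c := by push_cast; ring
  have hD4 : (4 : ℝ) ≤ 2 * (N : ℝ) - 2 := by
    have : (3 : ℝ) ≤ (N : ℝ) := by exact_mod_cast hN3
    linarith
  set D : ℝ := 2 * (N : ℝ) - 2 with hDdef
  clear_value D r c
  clear hDdef hrdef hcdef
  -- key inequality from hN : 2 / F < D^2 / 2^p
  have hNkey : 2 ^ p * 2 ^ (2 * N) < (Nat.factorial (2 * N + 1) : ℝ) * D ^ 2 := by
    have h1 : (0:ℝ) < (2:ℝ) ^ (2 * N) := by positivity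
    calc 2 ^ p * 2 ^ (2 * N)
        < ((Nat.factorial (2 * N + 1) : ℝ) * D ^ 2 / 2 ^ (2 * N)) * 2 ^ (2 * N) := by
          exact mul_lt_mul_of_pos_right hN h1
      _ = (Nat.factorial (2 * N + 1) : ℝ) * D ^ 2 := by field_simp
  have h2Npow : (64 : ℝ) ≤ 2 ^ (2 * N) := by
    calc (64 : ℝ) = 2 ^ 6 := by norm_num
      _ ≤ 2 ^ (2 * N) := by
          apply pow_le_pow_right₀ one_le_two (by omega)
  have hfaceq : (Nat.factorial (2 * N + 2) : ℝ) = (2 * N + 2) * (Nat.factorial (2 * N + 1)) := by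
    have : Nat.factorial (2 * N + 2) = (2 * N + 2) * Nat.factorial (2 * N + 1) := by
      rw [show 2 * N + 2 = (2 * N + 1) + 1 by ring, Nat.factorial_succ]
    rw [this]; push_cast; ring
  have hA : 2 / (Nat.factorial (2 * N + 2) : ℝ) < D ^ 2 / 2 ^ p := by
    rw [div_lt_div_iff₀ hfacpos hPpos]
    have hD2pos : (0:ℝ) < D ^ 2 := by positivity
    have h4 : (64:ℝ) * 2 ^ p ≤ 2 ^ (2 * N) * 2 ^ p :=
      mul_le_mul_of_nonneg_right h2Npow hPpos.le
    have h5 : (64:ℝ) * 2 ^ p < (Nat.factorial (2 * N + 1) : ℝ) * D ^ 2 := by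
      linarith [hNkey]
    have h6 : (8 : ℝ) ≤ 2 * (N:ℝ) + 2 := by
      have : (3 : ℝ) ≤ (N : ℝ) := by exact_mod_cast hN3
      linarith
    have h7 : (0:ℝ) < (Nat.factorial (2 * N + 1) : ℝ) * D ^ 2 := by positivity
    rw [hfaceq]
    calc 2 * 2 ^ p < 8 * (64 * 2 ^ p) := by linarith
      _ ≤ 8 * ((Nat.factorial (2 * N + 1) : ℝ) * D ^ 2) := by linarith
      _ ≤ (2 * (N:ℝ) + 2) * ((Nat.factorial (2 * N + 1) : ℝ) * D ^ 2) :=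
          mul_le_mul_of_nonneg_right h6 h7.le
      _ = D ^ 2 * ((2 * (N:ℝ) + 2) * (Nat.factorial (2 * N + 1) : ℝ)) := by ring
  have hD16 : (16:ℝ) ≤ D ^ 2 := by nlinarith [hD4]
  have hB : 1 / (2:ℝ) ^ p ≤ D ^ 2 / 2 ^ p / 16 := by
    rw [div_div, div_le_div_iff₀ hPpos (by positivity)]
    linarith [mul_le_mul_of_nonneg_right hD16 hPpos.le]
  -- exponent decomposition
  have hpq : (2:ℝ) ^ p = 2 ^ (p - 2 * c - 3) * 2 ^ (2 * c + 3) := by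
    rw [← pow_add]
    congr 1
    omega
  have hqpos : (0:ℝ) < 2 ^ (p - 2 * c - 3) := by positivity
  have hcpow : (0:ℝ) < (2:ℝ) ^ c := by positivity
  -- final chain
  have hmain : |Real.cos x - S| < 2 * D ^ 2 / 2 ^ p := by
    calc |Real.cos x - S| ≤ |Real.cos x - Real.cos r| + |Real.cos r - S| := by
          have := abs_sub_le (Real.cos x) (Real.cos r) S
          linarith
      _ ≤ |x - r| + 2 / (Nat.factorial (2 * N + 2) : ℝ) := by linarith [htail0, hlip]
      _ < 1 / 2 ^ p + D ^ 2 / 2 ^ p := by linarith [hxr, hA]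
      _ ≤ D ^ 2 / 2 ^ p / 16 + D ^ 2 / 2 ^ p := by linarith [hB]
      _ ≤ 2 * D ^ 2 / 2 ^ p := by
          have : (0:ℝ) ≤ D ^ 2 / 2 ^ p := by positivity
          rw [mul_div_assoc]
          linarith
  have hfin : 2 * D ^ 2 / 2 ^ p ≤ (49 / 100) * (1 / 2 ^ (p - 2 * c - 3)) := by
    have hDle : D ^ 2 ≤ ((2:ℝ) ^ c) ^ 2 := pow_le_pow_left₀ (by linarith) hclog 2
    have hexp : (2:ℝ) ^ (2 * c + 3) = 8 * ((2:ℝ) ^ c) ^ 2 := by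
      rw [show 2 * c + 3 = c + c + 3 by ring, pow_add, pow_add]
      ring
    rw [hpq]
    have key : 2 * D ^ 2 / 2 ^ (2 * c + 3) ≤ 49 / 100 := by
      rw [div_le_iff₀ (by positivity), hexp]
      linarith [hDle, sq_nonneg ((2:ℝ) ^ c)]
    calc 2 * D ^ 2 / (2 ^ (p - 2 * c - 3) * 2 ^ (2 * c + 3))
        = (2 * D ^ 2 / 2 ^ (2 * c + 3)) * (1 / 2 ^ (p - 2 * c - 3)) := by
          rw [div_mul_div_comm, mul_one,
            mul_comm ((2:ℝ) ^ (2 * c + 3)) ((2:ℝ) ^ (p - 2 * c - 3))]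
      _ ≤ (49 / 100) * (1 / 2 ^ (p - 2 * c - 3)) :=
          mul_le_mul_of_nonneg_right key (by positivity)
  calc |Real.cos x - S| < 2 * D ^ 2 / 2 ^ p := hmain
    _ ≤ (49 / 100) * (1 / 2 ^ (p - 2 * c - 3)) := hfin
    _ ≤ |S| * (1 / 2 ^ (p - 2 * c - 3)) := by
        rw [hSabs]
        apply mul_le_mul_of_nonneg_right hS_lb (by positivity)
end

section
/- Let x be a real number represented by (m,n,p), and let i ≥ 1 be a natural number with p ≥ 2⌈log₂ i⌉. Then x^i is represented by (m^i, n^i, p - 2⌈log₂ i⌉); that is, |x^i - (m/n)^i| < |(m/n)^i| * (1/2^(p - 2⌈log₂ i⌉)). -/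
/-- `|(1+e)^i - 1| ≤ (1+|e|)^i - 1`. -/
lemma aux_abs_pow_one_add (e : ℝ) : ∀ i : ℕ, |(1 + e) ^ i - 1| ≤ (1 + |e|) ^ i - 1 := by
  intro i
  induction i with
  | zero => simp
  | succ i ih =>
    have h1 : (1 + e) ^ (i + 1) - 1 = ((1 + e) ^ i - 1) * (1 + e) + e := by ring
    have h2 : |1 + e| ≤ 1 + |e| := (abs_add_le 1 e).trans (by simp)
    have h3 : (0:ℝ) ≤ (1 + |e|) ^ i - 1 := by
      linarith [one_le_pow₀ (a := 1 + |e|) (by linarith [abs_nonneg e]) (n := i)]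
    calc |(1 + e) ^ (i + 1) - 1| = |((1 + e) ^ i - 1) * (1 + e) + e| := by rw [h1]
      _ ≤ |(1 + e) ^ i - 1| * |1 + e| + |e| := by
          refine (abs_add_le _ _).trans ?_
          rw [abs_mul]
      _ ≤ ((1 + |e|) ^ i - 1) * (1 + |e|) + |e| := by
          gcongr
      _ = (1 + |e|) ^ (i + 1) - 1 := by ring

/-- `(1+t)^n ≤ 1 + 2nt` when `0 ≤ t` and `n·t ≤ 1/2`. -/
lemma aux_pow_one_add_le (t : ℝ) (ht : 0 ≤ t) :
    ∀ n : ℕ, (n : ℝ) * t ≤ 1 / 2 → (1 + t) ^ n ≤ 1 + 2 * n * t := by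
  intro n
  induction n with
  | zero => simp
  | succ n ih =>
    intro h
    have hn : (n : ℝ) * t ≤ 1 / 2 := by
      have : (n : ℝ) ≤ (n + 1 : ℕ) := by push_cast; linarith
      nlinarith
    have ih' := ih hn
    have h2 : 2 * (n : ℝ) * t * t ≤ t := by nlinarith
    calc (1 + t) ^ (n + 1) = (1 + t) ^ n * (1 + t) := by ring
      _ ≤ (1 + 2 * n * t) * (1 + t) := by
          apply mul_le_mul_of_nonneg_right ih' (by linarith)
      _ = 1 + (2 * n + 1) * t + 2 * n * t * t := by ring
      _ ≤ 1 + 2 * (n + 1 : ℕ) * t := by push_cast; nlinarith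

/-- If `x` is represented by `(m, n, p)` and `i ≥ 1` with `p ≥ 2 ⌈log₂ i⌉`, then
`x ^ i` is represented by `(m ^ i, n ^ i, p - 2 ⌈log₂ i⌉)`. -/
theorem pow_represented (x : ℝ) (m n : ℤ) (p i : ℕ)
    (hm : m ≠ 0) (hn : n ≠ 0) (hi : 1 ≤ i)
    (hp : 2 * Nat.clog 2 i ≤ p)
    (hx : |x - (m : ℝ) / (n : ℝ)| < |(m : ℝ) / (n : ℝ)| * (1 / 2 ^ p)) :
    |x ^ i - ((m : ℝ) / (n : ℝ)) ^ i| <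
      |((m : ℝ) / (n : ℝ)) ^ i| * (1 / 2 ^ (p - 2 * Nat.clog 2 i)) := by
  set a : ℝ := (m : ℝ) / (n : ℝ) with ha_def
  have ha : a ≠ 0 := by
    apply div_ne_zero <;> exact_mod_cast ‹_›
  have haabs : 0 < |a| := abs_pos.mpr ha
  -- case i = 1
  rcases eq_or_lt_of_le hi with h1 | h2
  · simp only [← h1]
    simpa using hx
  -- now 2 ≤ i
  set k := Nat.clog 2 i with hk_def
  have hk1 : 1 ≤ k := Nat.clog_pos (by norm_num) h2
  have hik : i ≤ 2 ^ k := Nat.le_pow_clog (by norm_num) i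
  set e : ℝ := x / a - 1 with he_def
  have hxe : x = a * (1 + e) := by rw [he_def]; field_simp; ring
  have hxa : x - a = a * e := by rw [hxe]; ring
  have he : |e| < 1 / 2 ^ p := by
    rw [hxa, abs_mul] at hx
    exact lt_of_mul_lt_mul_left hx (le_of_lt haabs)
  have hp2k : (2:ℝ) ^ p = 2 ^ (p - 2 * k) * 2 ^ (2 * k) := by
    rw [← pow_add, Nat.sub_add_cancel hp]
  have hkr : ((i : ℝ)) ≤ 2 ^ k := by exact_mod_cast hik
  have h2k : (2:ℝ) ^ p ≥ 2 ^ (2 * k) := by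
    apply pow_le_pow_right₀ (by norm_num) hp
  have hie : (i : ℝ) * |e| ≤ 1 / 2 := by
    have h1 : (i : ℝ) * |e| ≤ 2 ^ k * (1 / 2 ^ p) := by
      apply mul_le_mul hkr (le_of_lt he) (abs_nonneg _) (by positivity)
    have h2 : (2:ℝ) ^ k * (1 / 2 ^ p) ≤ 2 ^ k * (1 / 2 ^ (2 * k)) := by
      gcongr
    have h3 : (2:ℝ) ^ k * (1 / 2 ^ (2 * k)) = 1 / 2 ^ k := by
      rw [two_mul, pow_add]
      field_simp
    have h4 : (1:ℝ) / 2 ^ k ≤ 1 / 2 := by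
      gcongr
      calc (2:ℝ) = 2 ^ 1 := (pow_one 2).symm
        _ ≤ 2 ^ k := by apply pow_le_pow_right₀ (by norm_num) hk1
    linarith
  -- main estimate on the relative error
  have key : |(1 + e) ^ i - 1| < 1 / 2 ^ (p - 2 * k) := by
    have b1 := aux_abs_pow_one_add e i
    have b2 := aux_pow_one_add_le |e| (abs_nonneg e) i hie
    have b3 : 2 * (i : ℝ) * |e| < 2 * (i : ℝ) * (1 / 2 ^ p) := by
      apply mul_lt_mul_of_pos_left he
      have : (1:ℝ) ≤ (i : ℝ) := by exact_mod_cast hi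
      linarith
    have b4 : 2 * (i : ℝ) * (1 / 2 ^ p) ≤ 2 ^ (2 * k) * (1 / 2 ^ p) := by
      gcongr
      calc 2 * (i : ℝ) ≤ 2 * 2 ^ k := by linarith
        _ = 2 ^ (k + 1) := by ring
        _ ≤ 2 ^ (2 * k) := by
            apply pow_le_pow_right₀ (by norm_num)
            omega
    have b5 : (2:ℝ) ^ (2 * k) * (1 / 2 ^ p) = 1 / 2 ^ (p - 2 * k) := by
      rw [hp2k]
      field_simp
    linarith
  have habs : |x ^ i - a ^ i| = |a ^ i| * |(1 + e) ^ i - 1| := by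
    rw [hxe, mul_pow, ← abs_mul]
    congr 1
    ring
  rw [habs]
  exact mul_lt_mul_of_pos_left key (abs_pos.mpr (pow_ne_zero _ ha))
end

section
/- For every nonzero real number x, it holds that |x / ((1 + x²) · arctan(x))| < 1. -/
open Real

private lemma key {x : ℝ} (hx : 0 < x) : x / (1 + x ^ 2) < Real.arctan x := by
  have hmono : StrictMonoOn (fun t : ℝ => Real.arctan t - t / (1 + t ^ 2)) (Set.Ici 0) := by
    apply strictMonoOn_of_deriv_pos (convex_Ici 0)
    · apply Continuous.continuousOn
      apply Real.continuous_arctan.sub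
      exact continuous_id.div (by continuity) (fun t => by positivity)
    · intro t ht
      rw [interior_Ici] at ht
      have h1 : (1 : ℝ) + t ^ 2 ≠ 0 := by positivity
      have hd : HasDerivAt (fun t : ℝ => Real.arctan t - t / (1 + t ^ 2))
          (1 / (1 + t ^ 2) - (1 * (1 + t ^ 2) - t * (2 * t ^ 1)) / (1 + t ^ 2) ^ 2) t :=
        (Real.hasDerivAt_arctan t).sub
          ((hasDerivAt_id t).div ((hasDerivAt_pow 2 t).const_add 1) h1)
      rw [hd.deriv]
      have ht' : 0 < t := ht
      rw [div_sub_div _ _ h1 (by positivity)]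
      apply div_pos
      · nlinarith [sq_nonneg t]
      · positivity
  have := hmono (Set.self_mem_Ici) (Set.mem_Ici.mpr hx.le) hx
  simpa using this

/-- For every nonzero real `x`, `|x / ((1 + x ^ 2) * arctan x)| < 1`. -/
theorem abs_div_one_add_sq_mul_arctan_lt_one (x : ℝ) (hx : x ≠ 0) :
    |x / ((1 + x ^ 2) * Real.arctan x)| < 1 := by
  wlog hpos : 0 < x generalizing x
  · have hneg : 0 < -x := by cases hx.lt_or_gt with
      | inl h => linarith
      | inr h => exact absurd h hpos
    have := this (-x) (by simpa using hx) hneg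
    simpa [Real.arctan_neg, neg_div, neg_mul, mul_neg, div_neg, abs_neg] using this
  have ha : 0 < Real.arctan x := by simpa using Real.arctan_strictMono hpos
  have h1 : (0:ℝ) < 1 + x ^ 2 := by positivity
  have hk := key hpos
  rw [abs_of_pos (by positivity), div_lt_one (by positivity)]
  calc x = (x / (1 + x ^ 2)) * (1 + x ^ 2) := by field_simp
    _ < Real.arctan x * (1 + x ^ 2) := by exact mul_lt_mul_of_pos_right hk h1
    _ = (1 + x ^ 2) * Real.arctan x := mul_comm _ _
end

section
/- Let x > 0 be a real number and N ≥ 1 a natural number. Then the upper Riemann sum S = (x/N) · Σ_{i=0}^{N-1} 1/(1 + ((i·x)/N)²) for the integral of 1/(1+t²) over [0,x] satisfies |S - arctan(x)| ≤ x³ / (N·(1 + x²)). -/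
open intervalIntegral MeasureTheory

private lemma f_cont : Continuous (fun t : ℝ => 1 / (1 + t ^ 2)) := by
  apply Continuous.div continuous_const (by continuity)
  intro t; positivity

private lemma int_ub (a b : ℝ) (ha : 0 ≤ a) (hab : a ≤ b) :
    (∫ t in a..b, 1 / (1 + t ^ 2)) ≤ (b - a) * (1 / (1 + a ^ 2)) := by
  have h := intervalIntegral.integral_mono_on hab (f_cont.intervalIntegrable a b)
    (intervalIntegrable_const (μ := volume)) (f := fun t : ℝ => 1 / (1 + t ^ 2))
    (g := fun _ => 1 / (1 + a ^ 2)) ?_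
  · simpa [smul_eq_mul, mul_comm] using h
  · intro t ht
    have h0 : (0:ℝ) < 1 + a ^ 2 := by positivity
    show (1:ℝ) / (1 + t ^ 2) ≤ 1 / (1 + a ^ 2)
    exact one_div_le_one_div_of_le h0 (by nlinarith [pow_le_pow_left₀ ha ht.1 2])

private lemma int_lb (a b : ℝ) (ha : 0 ≤ a) (hab : a ≤ b) :
    (b - a) * (1 / (1 + b ^ 2)) ≤ ∫ t in a..b, 1 / (1 + t ^ 2) := by
  have h := intervalIntegral.integral_mono_on hab (intervalIntegrable_const (μ := volume))
    (f_cont.intervalIntegrable a b) (g := fun t : ℝ => 1 / (1 + t ^ 2))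
    (f := fun _ => 1 / (1 + b ^ 2)) ?_
  · simpa [smul_eq_mul, mul_comm] using h
  · intro t ht
    have h0 : (0:ℝ) < 1 + t ^ 2 := by positivity
    show (1:ℝ) / (1 + b ^ 2) ≤ 1 / (1 + t ^ 2)
    exact one_div_le_one_div_of_le h0 (by nlinarith [pow_le_pow_left₀ (ha.trans ht.1) ht.2 2])

/-- Error bound for the upper Riemann sum of `arctan`: if `x > 0` and `N ≥ 1`, then
`S = (x / N) * ∑_{i=0}^{N-1} 1 / (1 + ((i x) / N) ^ 2)` satisfies
`|S - arctan x| ≤ x ^ 3 / (N (1 + x ^ 2))`. -/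
theorem arctan_riemann_sum_error (x : ℝ) (N : ℕ) (hx : 0 < x) (hN : 1 ≤ N) :
    |x / N * (∑ i ∈ Finset.range N, 1 / (1 + ((i : ℝ) * x / N) ^ 2)) - Real.arctan x| ≤
      x ^ 3 / (N * (1 + x ^ 2)) := by
  have hNR : (0:ℝ) < N := by exact_mod_cast hN
  set p : ℕ → ℝ := fun i => (i : ℝ) * x / N with hp
  have hp0 : ∀ i : ℕ, 0 ≤ p i := fun i => by
    simp only [hp]; positivity
  have hpmono : ∀ i : ℕ, p i ≤ p (i + 1) := fun i => by
    simp only [hp]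
    gcongr ?_ * x / (N:ℝ)
    push_cast; linarith
  have hstep : ∀ i : ℕ, p (i + 1) - p i = x / N := fun i => by
    simp only [hp]; push_cast; ring
  -- arctan as sum of integrals
  have harc : ∀ i : ℕ, (∫ t in p i..p (i + 1), 1 / (1 + t ^ 2)) =
      Real.arctan (p (i + 1)) - Real.arctan (p i) := fun i =>
    integral_one_div_one_add_sq
  have htel : (∑ i ∈ Finset.range N, ∫ t in p i..p (i + 1), 1 / (1 + t ^ 2)) =
      Real.arctan x := by
    rw [Finset.sum_congr rfl fun i _ => harc i, Finset.sum_range_sub (fun i => Real.arctan (p i))]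
    have h0 : p 0 = 0 := by simp [hp]
    have hNx : p N = x := by simp only [hp]; exact mul_div_cancel_left₀ x hNR.ne'
    rw [h0, hNx, Real.arctan_zero, sub_zero]
  -- rewrite the difference as a sum of per-interval errors
  have hdiff : x / N * (∑ i ∈ Finset.range N, 1 / (1 + ((i : ℝ) * x / N) ^ 2)) -
      Real.arctan x =
      ∑ i ∈ Finset.range N,
        (x / N * (1 / (1 + (p i) ^ 2)) - ∫ t in p i..p (i + 1), 1 / (1 + t ^ 2)) := by
    rw [Finset.sum_sub_distrib, htel, Finset.mul_sum]
  rw [hdiff]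
  have hterm_lb : ∀ i ∈ Finset.range N,
      (0:ℝ) ≤ x / N * (1 / (1 + (p i) ^ 2)) - ∫ t in p i..p (i + 1), 1 / (1 + t ^ 2) := by
    intro i _
    have h := int_ub (p i) (p (i + 1)) (hp0 i) (hpmono i)
    rw [hstep i] at h
    linarith
  have hterm_ub : ∀ i ∈ Finset.range N,
      x / N * (1 / (1 + (p i) ^ 2)) - (∫ t in p i..p (i + 1), 1 / (1 + t ^ 2)) ≤
        x / N * (1 / (1 + (p i) ^ 2) - 1 / (1 + (p (i + 1)) ^ 2)) := by
    intro i _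
    have h := int_lb (p i) (p (i + 1)) (hp0 i) (hpmono i)
    rw [hstep i] at h
    linarith [mul_sub (x / N) (1 / (1 + (p i) ^ 2)) (1 / (1 + (p (i + 1)) ^ 2))]
  rw [abs_of_nonneg (Finset.sum_nonneg hterm_lb)]
  calc (∑ i ∈ Finset.range N,
        (x / N * (1 / (1 + (p i) ^ 2)) - ∫ t in p i..p (i + 1), 1 / (1 + t ^ 2)))
      ≤ ∑ i ∈ Finset.range N,
          x / N * (1 / (1 + (p i) ^ 2) - 1 / (1 + (p (i + 1)) ^ 2)) :=
        Finset.sum_le_sum hterm_ub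
    _ = x / N * (1 / (1 + (p 0) ^ 2) - 1 / (1 + (p N) ^ 2)) := by
        rw [← Finset.mul_sum, Finset.sum_range_sub' (fun i => 1 / (1 + (p i) ^ 2))]
    _ = x ^ 3 / (N * (1 + x ^ 2)) := by
        have h0 : p 0 = 0 := by simp [hp]
        have hNx : p N = x := by simp only [hp]; exact mul_div_cancel_left₀ x hNR.ne'
        rw [h0, hNx]
        have : (0:ℝ) < 1 + x ^ 2 := by positivity
        field_simp
        ring
end
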